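/- arXiv:1706.08381 — 3 statements merged into one kernel-verified Lean document; each statement's English description precedes it below -/
import Mathlib

section
/- Let f be a polynomial over ℂ of degree 7, and for 1 ≤ ρ ≤ 6 let φ_ρ denote the average of f over the multiset of the (7−ρ) roots of the ρ-th derivative f^(ρ) (counted with multiplicity). Then 1·φ₁ − 3·φ₂ + 5·φ₃ − 5·φ₄ + 3·φ₅ − 1·φ₆ = 0; i.e., the alternating binomial combination ∑_{0<ρ<7} (−1)^ρ·C(7,ρ)·φ_ρ vanishes (after dividing by 7). -/
set_option maxHeartbeats 1000000

open Polynomial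

/-- The average of `f` over the roots of the `ρ`-th derivative of `f`,
counted with multiplicity. -/
noncomputable def phi (f : Polynomial ℂ) (ρ : ℕ) : ℂ :=
  ((derivative^[ρ] f).roots.map (fun x => f.eval x)).sum / ((f.natDegree - ρ : ℕ) : ℂ)

noncomputable def msP (t : Multiset ℂ) (k : ℕ) : ℂ := (t.map (· ^ k)).sum

@[simp] lemma msP_nil (k : ℕ) : msP 0 k = 0 := by simp [msP]

@[simp] lemma msP_cons (x : ℂ) (t : Multiset ℂ) (k : ℕ) :
    msP (x ::ₘ t) k = x ^ k + msP t k := by simp [msP]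

@[simp] lemma esymm_zero' (t : Multiset ℂ) : t.esymm 0 = 1 := by
  simp [Multiset.esymm, Multiset.powersetCard_zero_left]

lemma esymm_nil' (n : ℕ) : (0 : Multiset ℂ).esymm (n+1) = 0 := by
  simp [Multiset.esymm, Multiset.powersetCard_zero_right]

lemma esymm_cons (x : ℂ) (t : Multiset ℂ) (n : ℕ) :
    (x ::ₘ t).esymm (n+1) = t.esymm (n+1) + x * t.esymm n := by
  simp only [Multiset.esymm, Multiset.powersetCard_cons, Multiset.map_add, Multiset.sum_add,
    Multiset.map_map, Function.comp_def, Multiset.prod_cons]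
  rw [Multiset.sum_map_mul_left]

lemma esymm_eq_zero (t : Multiset ℂ) {n : ℕ} (h : Multiset.card t < n) : t.esymm n = 0 := by
  simp [Multiset.esymm, Multiset.powersetCard_eq_empty _ h]

lemma msP_zero_card (t : Multiset ℂ) : msP t 0 = (Multiset.card t : ℂ) := by simp [msP]

@[simp] lemma esymm_nil1 : (0 : Multiset ℂ).esymm 1 = 0 := esymm_nil' 0
@[simp] lemma esymm_nil2 : (0 : Multiset ℂ).esymm 2 = 0 := esymm_nil' 1
@[simp] lemma esymm_nil3 : (0 : Multiset ℂ).esymm 3 = 0 := esymm_nil' 2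
@[simp] lemma esymm_nil4 : (0 : Multiset ℂ).esymm 4 = 0 := esymm_nil' 3
@[simp] lemma esymm_nil5 : (0 : Multiset ℂ).esymm 5 = 0 := esymm_nil' 4
@[simp] lemma esymm_nil6 : (0 : Multiset ℂ).esymm 6 = 0 := esymm_nil' 5
@[simp] lemma esymm_nil7 : (0 : Multiset ℂ).esymm 7 = 0 := esymm_nil' 6

@[simp] lemma esymm_cons1 (x : ℂ) (t : Multiset ℂ) :
    (x ::ₘ t).esymm 1 = t.esymm 1 + x * t.esymm 0 := esymm_cons x t 0
@[simp] lemma esymm_cons2 (x : ℂ) (t : Multiset ℂ) :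
    (x ::ₘ t).esymm 2 = t.esymm 2 + x * t.esymm 1 := esymm_cons x t 1
@[simp] lemma esymm_cons3 (x : ℂ) (t : Multiset ℂ) :
    (x ::ₘ t).esymm 3 = t.esymm 3 + x * t.esymm 2 := esymm_cons x t 2
@[simp] lemma esymm_cons4 (x : ℂ) (t : Multiset ℂ) :
    (x ::ₘ t).esymm 4 = t.esymm 4 + x * t.esymm 3 := esymm_cons x t 3
@[simp] lemma esymm_cons5 (x : ℂ) (t : Multiset ℂ) :
    (x ::ₘ t).esymm 5 = t.esymm 5 + x * t.esymm 4 := esymm_cons x t 4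
@[simp] lemma esymm_cons6 (x : ℂ) (t : Multiset ℂ) :
    (x ::ₘ t).esymm 6 = t.esymm 6 + x * t.esymm 5 := esymm_cons x t 5
@[simp] lemma esymm_cons7 (x : ℂ) (t : Multiset ℂ) :
    (x ::ₘ t).esymm 7 = t.esymm 7 + x * t.esymm 6 := esymm_cons x t 6

lemma newton1 (t : Multiset ℂ) : msP t 1 = 1 * t.esymm 1 := by
  induction t using Multiset.induction with
  | empty => simp
  | cons x s ih =>
    simp only [msP_cons, esymm_cons1, esymm_cons2, esymm_cons3, esymm_cons4, esymm_cons5,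
      esymm_cons6, esymm_cons7, esymm_zero']
    linear_combination ih

lemma newton2 (t : Multiset ℂ) : msP t 2 = t.esymm 1 * msP t 1 - 2 * t.esymm 2 := by
  induction t using Multiset.induction with
  | empty => simp
  | cons x s ih =>
    simp only [msP_cons, esymm_cons1, esymm_cons2, esymm_cons3, esymm_cons4, esymm_cons5,
      esymm_cons6, esymm_cons7, esymm_zero']
    linear_combination ih - x * newton1 s

lemma newton3 (t : Multiset ℂ) : msP t 3 = t.esymm 1 * msP t 2 - t.esymm 2 * msP t 1 + 3 * t.esymm 3 := by
  induction t using Multiset.induction with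
  | empty => simp
  | cons x s ih =>
    simp only [msP_cons, esymm_cons1, esymm_cons2, esymm_cons3, esymm_cons4, esymm_cons5,
      esymm_cons6, esymm_cons7, esymm_zero']
    linear_combination ih - x * newton2 s

lemma newton4 (t : Multiset ℂ) : msP t 4 = t.esymm 1 * msP t 3 - t.esymm 2 * msP t 2 + t.esymm 3 * msP t 1 - 4 * t.esymm 4 := by
  induction t using Multiset.induction with
  | empty => simp
  | cons x s ih =>
    simp only [msP_cons, esymm_cons1, esymm_cons2, esymm_cons3, esymm_cons4, esymm_cons5,
      esymm_cons6, esymm_cons7, esymm_zero']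
    linear_combination ih - x * newton3 s

lemma newton5 (t : Multiset ℂ) : msP t 5 = t.esymm 1 * msP t 4 - t.esymm 2 * msP t 3 + t.esymm 3 * msP t 2 - t.esymm 4 * msP t 1 + 5 * t.esymm 5 := by
  induction t using Multiset.induction with
  | empty => simp
  | cons x s ih =>
    simp only [msP_cons, esymm_cons1, esymm_cons2, esymm_cons3, esymm_cons4, esymm_cons5,
      esymm_cons6, esymm_cons7, esymm_zero']
    linear_combination ih - x * newton4 s

lemma newton6 (t : Multiset ℂ) : msP t 6 = t.esymm 1 * msP t 5 - t.esymm 2 * msP t 4 + t.esymm 3 * msP t 3 - t.esymm 4 * msP t 2 + t.esymm 5 * msP t 1 - 6 * t.esymm 6 := by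
  induction t using Multiset.induction with
  | empty => simp
  | cons x s ih =>
    simp only [msP_cons, esymm_cons1, esymm_cons2, esymm_cons3, esymm_cons4, esymm_cons5,
      esymm_cons6, esymm_cons7, esymm_zero']
    linear_combination ih - x * newton5 s

lemma newton7 (t : Multiset ℂ) : msP t 7 = t.esymm 1 * msP t 6 - t.esymm 2 * msP t 5 + t.esymm 3 * msP t 4 - t.esymm 4 * msP t 3 + t.esymm 5 * msP t 2 - t.esymm 6 * msP t 1 + 7 * t.esymm 7 := by
  induction t using Multiset.induction with
  | empty => simp
  | cons x s ih =>
    simp only [msP_cons, esymm_cons1, esymm_cons2, esymm_cons3, esymm_cons4, esymm_cons5,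
      esymm_cons6, esymm_cons7, esymm_zero']
    linear_combination ih - x * newton6 s

lemma sum_map_eval (f : Polynomial ℂ) (hnd : f.natDegree = 7) (t : Multiset ℂ) :
    (t.map (fun x => f.eval x)).sum =
      f.coeff 0 * msP t 0 + f.coeff 1 * msP t 1 + f.coeff 2 * msP t 2 + f.coeff 3 * msP t 3 +
      f.coeff 4 * msP t 4 + f.coeff 5 * msP t 5 + f.coeff 6 * msP t 6 + f.coeff 7 * msP t 7 := by
  induction t using Multiset.induction with
  | empty => simp
  | cons x s ih =>
    rw [Multiset.map_cons, Multiset.sum_cons, ih, eval_eq_sum_range, hnd]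
    simp only [Finset.sum_range_succ, Finset.sum_range_zero, msP_cons]
    ring

/-- In any septic, `1·φ₁ − 3·φ₂ + 5·φ₃ − 5·φ₄ + 3·φ₅ − 1·φ₆ = 0`. -/
theorem septic_alternating_binomial_relation (f : Polynomial ℂ) (hf : f.degree = 7) :
    1 * phi f 1 - 3 * phi f 2 + 5 * phi f 3 - 5 * phi f 4 + 3 * phi f 5 - 1 * phi f 6
      = 0 := by
  have hnd : f.natDegree = 7 := natDegree_eq_of_degree_eq_some hf
  have hf0 : f ≠ 0 := fun h => by simp [h] at hf
  have ha7 : f.coeff 7 ≠ 0 := by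
    have := leadingCoeff_ne_zero.mpr hf0
    rwa [leadingCoeff, hnd] at this
  have hc1_0 : (derivative^[1] f).coeff 0 = (1:ℂ) * f.coeff 1 := by
    rw [coeff_iterate_derivative]; norm_num [Nat.descFactorial]
  have hc1_1 : (derivative^[1] f).coeff 1 = (2:ℂ) * f.coeff 2 := by
    rw [coeff_iterate_derivative]; norm_num [Nat.descFactorial]
  have hc1_2 : (derivative^[1] f).coeff 2 = (3:ℂ) * f.coeff 3 := by
    rw [coeff_iterate_derivative]; norm_num [Nat.descFactorial]
  have hc1_3 : (derivative^[1] f).coeff 3 = (4:ℂ) * f.coeff 4 := by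
    rw [coeff_iterate_derivative]; norm_num [Nat.descFactorial]
  have hc1_4 : (derivative^[1] f).coeff 4 = (5:ℂ) * f.coeff 5 := by
    rw [coeff_iterate_derivative]; norm_num [Nat.descFactorial]
  have hc1_5 : (derivative^[1] f).coeff 5 = (6:ℂ) * f.coeff 6 := by
    rw [coeff_iterate_derivative]; norm_num [Nat.descFactorial]
  have hc1_6 : (derivative^[1] f).coeff 6 = (7:ℂ) * f.coeff 7 := by
    rw [coeff_iterate_derivative]; norm_num [Nat.descFactorial]
  have hndg1 : (derivative^[1] f).natDegree = 6 := by
    refine le_antisymm ?_ (le_natDegree_of_ne_zero (n := 6) ?_)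
    · have := natDegree_iterate_derivative f 1
      rwa [hnd] at this
    · rw [hc1_6]; exact mul_ne_zero (by norm_num) ha7
  have hcard1 : Multiset.card (derivative^[1] f).roots = (derivative^[1] f).natDegree :=
    (splits_iff_card_roots).mp (IsAlgClosed.splits _)
  have hcardn1 : Multiset.card (derivative^[1] f).roots = 6 := by rw [hcard1, hndg1]
  have hlc1 : (derivative^[1] f).leadingCoeff = (7:ℂ) * f.coeff 7 := by
    rw [leadingCoeff, hndg1, hc1_6]
  have hV1_1 : (derivative^[1] f).coeff 5 = (derivative^[1] f).leadingCoeff * (-1) ^ 1 * (derivative^[1] f).roots.esymm 1 := by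
    have h := Polynomial.coeff_eq_esymm_roots_of_card hcard1 (k := 5) (by rw [hndg1]; norm_num)
    rwa [hndg1] at h
  have hV1_2 : (derivative^[1] f).coeff 4 = (derivative^[1] f).leadingCoeff * (-1) ^ 2 * (derivative^[1] f).roots.esymm 2 := by
    have h := Polynomial.coeff_eq_esymm_roots_of_card hcard1 (k := 4) (by rw [hndg1]; norm_num)
    rwa [hndg1] at h
  have hV1_3 : (derivative^[1] f).coeff 3 = (derivative^[1] f).leadingCoeff * (-1) ^ 3 * (derivative^[1] f).roots.esymm 3 := by
    have h := Polynomial.coeff_eq_esymm_roots_of_card hcard1 (k := 3) (by rw [hndg1]; norm_num)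
    rwa [hndg1] at h
  have hV1_4 : (derivative^[1] f).coeff 2 = (derivative^[1] f).leadingCoeff * (-1) ^ 4 * (derivative^[1] f).roots.esymm 4 := by
    have h := Polynomial.coeff_eq_esymm_roots_of_card hcard1 (k := 2) (by rw [hndg1]; norm_num)
    rwa [hndg1] at h
  have hV1_5 : (derivative^[1] f).coeff 1 = (derivative^[1] f).leadingCoeff * (-1) ^ 5 * (derivative^[1] f).roots.esymm 5 := by
    have h := Polynomial.coeff_eq_esymm_roots_of_card hcard1 (k := 1) (by rw [hndg1]; norm_num)
    rwa [hndg1] at h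
  have hV1_6 : (derivative^[1] f).coeff 0 = (derivative^[1] f).leadingCoeff * (-1) ^ 6 * (derivative^[1] f).roots.esymm 6 := by
    have h := Polynomial.coeff_eq_esymm_roots_of_card hcard1 (k := 0) (by rw [hndg1]; norm_num)
    rwa [hndg1] at h
  have hem1_1 : (derivative^[1] f).roots.esymm 1 * ((7:ℂ) * f.coeff 7) = -((6:ℂ) * f.coeff 6) := by
    linear_combination hV1_1 - hc1_5 - (derivative^[1] f).roots.esymm 1 * hlc1
  have hem1_2 : (derivative^[1] f).roots.esymm 2 * ((7:ℂ) * f.coeff 7) = (5:ℂ) * f.coeff 5 := by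
    linear_combination - hV1_2 + hc1_4 - (derivative^[1] f).roots.esymm 2 * hlc1
  have hem1_3 : (derivative^[1] f).roots.esymm 3 * ((7:ℂ) * f.coeff 7) = -((4:ℂ) * f.coeff 4) := by
    linear_combination hV1_3 - hc1_3 - (derivative^[1] f).roots.esymm 3 * hlc1
  have hem1_4 : (derivative^[1] f).roots.esymm 4 * ((7:ℂ) * f.coeff 7) = (3:ℂ) * f.coeff 3 := by
    linear_combination - hV1_4 + hc1_2 - (derivative^[1] f).roots.esymm 4 * hlc1
  have hem1_5 : (derivative^[1] f).roots.esymm 5 * ((7:ℂ) * f.coeff 7) = -((2:ℂ) * f.coeff 2) := by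
    linear_combination hV1_5 - hc1_1 - (derivative^[1] f).roots.esymm 5 * hlc1
  have hem1_6 : (derivative^[1] f).roots.esymm 6 * ((7:ℂ) * f.coeff 7) = (1:ℂ) * f.coeff 1 := by
    linear_combination - hV1_6 + hc1_0 - (derivative^[1] f).roots.esymm 6 * hlc1
  have hez1_7 : (derivative^[1] f).roots.esymm 7 = 0 := esymm_eq_zero _ (by rw [hcardn1]; norm_num)
  have hpm1_0 : msP (derivative^[1] f).roots 0 = 6 := by
    rw [msP_zero_card, hcardn1]; norm_num
  have hpm1_1 : msP (derivative^[1] f).roots 1 * ((7:ℂ) * f.coeff 7) = -(6:ℂ) * f.coeff 6 := by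
    linear_combination ((7:ℂ) * f.coeff 7) * newton1 (derivative^[1] f).roots + ((1:ℂ) * (1:ℂ)) * hem1_1
  have hpm1_2 : msP (derivative^[1] f).roots 2 * ((49:ℂ) * f.coeff 7 ^ 2) = -(70:ℂ) * f.coeff 5 * f.coeff 7 + (36:ℂ) * f.coeff 6 ^ 2 := by
    linear_combination ((49:ℂ) * f.coeff 7 ^ 2) * newton2 (derivative^[1] f).roots + ((7:ℂ) * f.coeff 7 * msP (derivative^[1] f).roots 1) * hem1_1 + ((-6:ℂ) * f.coeff 6 * (1:ℂ)) * hpm1_1 + ((-14:ℂ) * f.coeff 7) * hem1_2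
  have hpm1_3 : msP (derivative^[1] f).roots 3 * ((343:ℂ) * f.coeff 7 ^ 3) = -(588:ℂ) * f.coeff 4 * f.coeff 7 ^ 2 + (630:ℂ) * f.coeff 5 * f.coeff 6 * f.coeff 7 - (216:ℂ) * f.coeff 6 ^ 3 := by
    linear_combination ((343:ℂ) * f.coeff 7 ^ 3) * newton3 (derivative^[1] f).roots + ((49:ℂ) * f.coeff 7 ^ 2 * msP (derivative^[1] f).roots 2) * hem1_1 + ((-6:ℂ) * f.coeff 6 * (1:ℂ)) * hpm1_2 + ((-49:ℂ) * f.coeff 7 ^ 2 * msP (derivative^[1] f).roots 1) * hem1_2 + ((-35:ℂ) * f.coeff 5 * f.coeff 7) * hpm1_1 + ((147:ℂ) * f.coeff 7 ^ 2) * hem1_3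
  have hpm1_4 : msP (derivative^[1] f).roots 4 * ((2401:ℂ) * f.coeff 7 ^ 4) = -(4116:ℂ) * f.coeff 3 * f.coeff 7 ^ 3 + (4704:ℂ) * f.coeff 4 * f.coeff 6 * f.coeff 7 ^ 2 + (2450:ℂ) * f.coeff 5 ^ 2 * f.coeff 7 ^ 2 - (5040:ℂ) * f.coeff 5 * f.coeff 6 ^ 2 * f.coeff 7 + (1296:ℂ) * f.coeff 6 ^ 4 := by
    linear_combination ((2401:ℂ) * f.coeff 7 ^ 4) * newton4 (derivative^[1] f).roots + ((343:ℂ) * f.coeff 7 ^ 3 * msP (derivative^[1] f).roots 3) * hem1_1 + ((-6:ℂ) * f.coeff 6 * (1:ℂ)) * hpm1_3 + ((-343:ℂ) * f.coeff 7 ^ 3 * msP (derivative^[1] f).roots 2) * hem1_2 + ((-35:ℂ) * f.coeff 5 * f.coeff 7) * hpm1_2 + ((343:ℂ) * f.coeff 7 ^ 3 * msP (derivative^[1] f).roots 1) * hem1_3 + ((-196:ℂ) * f.coeff 4 * f.coeff 7 ^ 2) * hpm1_1 + ((-1372:ℂ) * f.coeff 7 ^ 3) * hem1_4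
  have hpm1_5 : msP (derivative^[1] f).roots 5 * ((16807:ℂ) * f.coeff 7 ^ 5) = -(24010:ℂ) * f.coeff 2 * f.coeff 7 ^ 4 + (30870:ℂ) * f.coeff 3 * f.coeff 6 * f.coeff 7 ^ 3 + (34300:ℂ) * f.coeff 4 * f.coeff 5 * f.coeff 7 ^ 3 - (35280:ℂ) * f.coeff 4 * f.coeff 6 ^ 2 * f.coeff 7 ^ 2 - (36750:ℂ) * f.coeff 5 ^ 2 * f.coeff 6 * f.coeff 7 ^ 2 + (37800:ℂ) * f.coeff 5 * f.coeff 6 ^ 3 * f.coeff 7 - (7776:ℂ) * f.coeff 6 ^ 5 := by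
    linear_combination ((16807:ℂ) * f.coeff 7 ^ 5) * newton5 (derivative^[1] f).roots + ((2401:ℂ) * f.coeff 7 ^ 4 * msP (derivative^[1] f).roots 4) * hem1_1 + ((-6:ℂ) * f.coeff 6 * (1:ℂ)) * hpm1_4 + ((-2401:ℂ) * f.coeff 7 ^ 4 * msP (derivative^[1] f).roots 3) * hem1_2 + ((-35:ℂ) * f.coeff 5 * f.coeff 7) * hpm1_3 + ((2401:ℂ) * f.coeff 7 ^ 4 * msP (derivative^[1] f).roots 2) * hem1_3 + ((-196:ℂ) * f.coeff 4 * f.coeff 7 ^ 2) * hpm1_2 + ((-2401:ℂ) * f.coeff 7 ^ 4 * msP (derivative^[1] f).roots 1) * hem1_4 + ((-1029:ℂ) * f.coeff 3 * f.coeff 7 ^ 3) * hpm1_1 + ((12005:ℂ) * f.coeff 7 ^ 4) * hem1_5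
  have hpm1_6 : msP (derivative^[1] f).roots 6 * ((117649:ℂ) * f.coeff 7 ^ 6) = -(100842:ℂ) * f.coeff 1 * f.coeff 7 ^ 5 + (172872:ℂ) * f.coeff 2 * f.coeff 6 * f.coeff 7 ^ 4 + (216090:ℂ) * f.coeff 3 * f.coeff 5 * f.coeff 7 ^ 4 - (222264:ℂ) * f.coeff 3 * f.coeff 6 ^ 2 * f.coeff 7 ^ 3 + (115248:ℂ) * f.coeff 4 ^ 2 * f.coeff 7 ^ 4 - (493920:ℂ) * f.coeff 4 * f.coeff 5 * f.coeff 6 * f.coeff 7 ^ 3 + (254016:ℂ) * f.coeff 4 * f.coeff 6 ^ 3 * f.coeff 7 ^ 2 - (85750:ℂ) * f.coeff 5 ^ 3 * f.coeff 7 ^ 3 + (396900:ℂ) * f.coeff 5 ^ 2 * f.coeff 6 ^ 2 * f.coeff 7 ^ 2 - (272160:ℂ) * f.coeff 5 * f.coeff 6 ^ 4 * f.coeff 7 + (46656:ℂ) * f.coeff 6 ^ 6 := by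
    linear_combination ((117649:ℂ) * f.coeff 7 ^ 6) * newton6 (derivative^[1] f).roots + ((16807:ℂ) * f.coeff 7 ^ 5 * msP (derivative^[1] f).roots 5) * hem1_1 + ((-6:ℂ) * f.coeff 6 * (1:ℂ)) * hpm1_5 + ((-16807:ℂ) * f.coeff 7 ^ 5 * msP (derivative^[1] f).roots 4) * hem1_2 + ((-35:ℂ) * f.coeff 5 * f.coeff 7) * hpm1_4 + ((16807:ℂ) * f.coeff 7 ^ 5 * msP (derivative^[1] f).roots 3) * hem1_3 + ((-196:ℂ) * f.coeff 4 * f.coeff 7 ^ 2) * hpm1_3 + ((-16807:ℂ) * f.coeff 7 ^ 5 * msP (derivative^[1] f).roots 2) * hem1_4 + ((-1029:ℂ) * f.coeff 3 * f.coeff 7 ^ 3) * hpm1_2 + ((16807:ℂ) * f.coeff 7 ^ 5 * msP (derivative^[1] f).roots 1) * hem1_5 + ((-4802:ℂ) * f.coeff 2 * f.coeff 7 ^ 4) * hpm1_1 + ((-100842:ℂ) * f.coeff 7 ^ 5) * hem1_6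
  have hpm1_7 : msP (derivative^[1] f).roots 7 * ((823543:ℂ) * f.coeff 7 ^ 7) = (705894:ℂ) * f.coeff 1 * f.coeff 6 * f.coeff 7 ^ 5 + (1176490:ℂ) * f.coeff 2 * f.coeff 5 * f.coeff 7 ^ 5 - (1210104:ℂ) * f.coeff 2 * f.coeff 6 ^ 2 * f.coeff 7 ^ 4 + (1411788:ℂ) * f.coeff 3 * f.coeff 4 * f.coeff 7 ^ 5 - (3025260:ℂ) * f.coeff 3 * f.coeff 5 * f.coeff 6 * f.coeff 7 ^ 4 + (1555848:ℂ) * f.coeff 3 * f.coeff 6 ^ 3 * f.coeff 7 ^ 3 - (1613472:ℂ) * f.coeff 4 ^ 2 * f.coeff 6 * f.coeff 7 ^ 4 - (1680700:ℂ) * f.coeff 4 * f.coeff 5 ^ 2 * f.coeff 7 ^ 4 + (5186160:ℂ) * f.coeff 4 * f.coeff 5 * f.coeff 6 ^ 2 * f.coeff 7 ^ 3 - (1778112:ℂ) * f.coeff 4 * f.coeff 6 ^ 4 * f.coeff 7 ^ 2 + (1800750:ℂ) * f.coeff 5 ^ 3 * f.coeff 6 * f.coeff 7 ^ 3 - (3704400:ℂ)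 * f.coeff 5 ^ 2 * f.coeff 6 ^ 3 * f.coeff 7 ^ 2 + (1905120:ℂ) * f.coeff 5 * f.coeff 6 ^ 5 * f.coeff 7 - (279936:ℂ) * f.coeff 6 ^ 7 := by
    linear_combination ((823543:ℂ) * f.coeff 7 ^ 7) * newton7 (derivative^[1] f).roots + ((117649:ℂ) * f.coeff 7 ^ 6 * msP (derivative^[1] f).roots 6) * hem1_1 + ((-6:ℂ) * f.coeff 6 * (1:ℂ)) * hpm1_6 + ((-117649:ℂ) * f.coeff 7 ^ 6 * msP (derivative^[1] f).roots 5) * hem1_2 + ((-35:ℂ) * f.coeff 5 * f.coeff 7) * hpm1_5 + ((117649:ℂ) * f.coeff 7 ^ 6 * msP (derivative^[1] f).roots 4) * hem1_3 + ((-196:ℂ) * f.coeff 4 * f.coeff 7 ^ 2) * hpm1_4 + ((-117649:ℂ) * f.coeff 7 ^ 6 * msP (derivative^[1] f).roots 3) * hem1_4 + ((-1029:ℂ) * f.coeff 3 * f.coeff 7 ^ 3) * hpm1_3 + ((117649:ℂ) * f.coeff 7 ^ 6 * msP (derivative^[1] f).roots 2) * hem1_5 + ((-4802:ℂ) * f.coeff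 2 * f.coeff 7 ^ 4) * hpm1_2 + ((-117649:ℂ) * f.coeff 7 ^ 6 * msP (derivative^[1] f).roots 1) * hem1_6 + ((-16807:ℂ) * f.coeff 1 * f.coeff 7 ^ 5) * hpm1_1 + ((5764801:ℂ) * f.coeff 7 ^ 7) * hez1_7
  have hS1 : ((derivative^[1] f).roots.map (fun x => f.eval x)).sum * ((823543:ℂ) * f.coeff 7 ^ 7) = (4941258:ℂ) * f.coeff 0 * f.coeff 7 ^ 7 - (705894:ℂ) * f.coeff 1 * f.coeff 6 * f.coeff 7 ^ 6 - (1176490:ℂ) * f.coeff 2 * f.coeff 5 * f.coeff 7 ^ 6 + (605052:ℂ) * f.coeff 2 * f.coeff 6 ^ 2 * f.coeff 7 ^ 5 - (1411788:ℂ) * f.coeff 3 * f.coeff 4 * f.coeff 7 ^ 6 + (1512630:ℂ) * f.coeff 3 * f.coeff 5 * f.coeff 6 * f.coeff 7 ^ 5 - (518616:ℂ) * f.coeff 3 * f.coeff 6 ^ 3 * f.coeff 7 ^ 4 + (806736:ℂ) * f.coeff 4 ^ 2 * f.coeff 6 * f.coeff 7 ^ 5 + (840350:ℂ) * f.coeff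 4 * f.coeff 5 ^ 2 * f.coeff 7 ^ 5 - (1728720:ℂ) * f.coeff 4 * f.coeff 5 * f.coeff 6 ^ 2 * f.coeff 7 ^ 4 + (444528:ℂ) * f.coeff 4 * f.coeff 6 ^ 4 * f.coeff 7 ^ 3 - (600250:ℂ) * f.coeff 5 ^ 3 * f.coeff 6 * f.coeff 7 ^ 4 + (926100:ℂ) * f.coeff 5 ^ 2 * f.coeff 6 ^ 3 * f.coeff 7 ^ 3 - (381024:ℂ) * f.coeff 5 * f.coeff 6 ^ 5 * f.coeff 7 ^ 2 + (46656:ℂ) * f.coeff 6 ^ 7 * f.coeff 7 := by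
    rw [sum_map_eval f hnd]
    linear_combination ((823543:ℂ) * f.coeff 7 ^ 7 * f.coeff 0) * hpm1_0 + ((117649:ℂ) * f.coeff 1 * f.coeff 7 ^ 6) * hpm1_1 + ((16807:ℂ) * f.coeff 2 * f.coeff 7 ^ 5) * hpm1_2 + ((2401:ℂ) * f.coeff 3 * f.coeff 7 ^ 4) * hpm1_3 + ((343:ℂ) * f.coeff 4 * f.coeff 7 ^ 3) * hpm1_4 + ((49:ℂ) * f.coeff 5 * f.coeff 7 ^ 2) * hpm1_5 + ((7:ℂ) * f.coeff 6 * f.coeff 7) * hpm1_6 + ((1:ℂ) * f.coeff 7 * (1:ℂ)) * hpm1_7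
  have hc2_0 : (derivative^[2] f).coeff 0 = (2:ℂ) * f.coeff 2 := by
    rw [coeff_iterate_derivative]; norm_num [Nat.descFactorial]
  have hc2_1 : (derivative^[2] f).coeff 1 = (6:ℂ) * f.coeff 3 := by
    rw [coeff_iterate_derivative]; norm_num [Nat.descFactorial]
  have hc2_2 : (derivative^[2] f).coeff 2 = (12:ℂ) * f.coeff 4 := by
    rw [coeff_iterate_derivative]; norm_num [Nat.descFactorial]
  have hc2_3 : (derivative^[2] f).coeff 3 = (20:ℂ) * f.coeff 5 := by
    rw [coeff_iterate_derivative]; norm_num [Nat.descFactorial]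
  have hc2_4 : (derivative^[2] f).coeff 4 = (30:ℂ) * f.coeff 6 := by
    rw [coeff_iterate_derivative]; norm_num [Nat.descFactorial]
  have hc2_5 : (derivative^[2] f).coeff 5 = (42:ℂ) * f.coeff 7 := by
    rw [coeff_iterate_derivative]; norm_num [Nat.descFactorial]
  have hndg2 : (derivative^[2] f).natDegree = 5 := by
    refine le_antisymm ?_ (le_natDegree_of_ne_zero (n := 5) ?_)
    · have := natDegree_iterate_derivative f 2
      rwa [hnd] at this
    · rw [hc2_5]; exact mul_ne_zero (by norm_num) ha7
  have hcard2 : Multiset.card (derivative^[2] f).roots = (derivative^[2] f).natDegree :=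
    (splits_iff_card_roots).mp (IsAlgClosed.splits _)
  have hcardn2 : Multiset.card (derivative^[2] f).roots = 5 := by rw [hcard2, hndg2]
  have hlc2 : (derivative^[2] f).leadingCoeff = (42:ℂ) * f.coeff 7 := by
    rw [leadingCoeff, hndg2, hc2_5]
  have hV2_1 : (derivative^[2] f).coeff 4 = (derivative^[2] f).leadingCoeff * (-1) ^ 1 * (derivative^[2] f).roots.esymm 1 := by
    have h := Polynomial.coeff_eq_esymm_roots_of_card hcard2 (k := 4) (by rw [hndg2]; norm_num)
    rwa [hndg2] at h
  have hV2_2 : (derivative^[2] f).coeff 3 = (derivative^[2] f).leadingCoeff * (-1) ^ 2 * (derivative^[2] f).roots.esymm 2 := by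
    have h := Polynomial.coeff_eq_esymm_roots_of_card hcard2 (k := 3) (by rw [hndg2]; norm_num)
    rwa [hndg2] at h
  have hV2_3 : (derivative^[2] f).coeff 2 = (derivative^[2] f).leadingCoeff * (-1) ^ 3 * (derivative^[2] f).roots.esymm 3 := by
    have h := Polynomial.coeff_eq_esymm_roots_of_card hcard2 (k := 2) (by rw [hndg2]; norm_num)
    rwa [hndg2] at h
  have hV2_4 : (derivative^[2] f).coeff 1 = (derivative^[2] f).leadingCoeff * (-1) ^ 4 * (derivative^[2] f).roots.esymm 4 := by
    have h := Polynomial.coeff_eq_esymm_roots_of_card hcard2 (k := 1) (by rw [hndg2]; norm_num)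
    rwa [hndg2] at h
  have hV2_5 : (derivative^[2] f).coeff 0 = (derivative^[2] f).leadingCoeff * (-1) ^ 5 * (derivative^[2] f).roots.esymm 5 := by
    have h := Polynomial.coeff_eq_esymm_roots_of_card hcard2 (k := 0) (by rw [hndg2]; norm_num)
    rwa [hndg2] at h
  have hem2_1 : (derivative^[2] f).roots.esymm 1 * ((42:ℂ) * f.coeff 7) = -((30:ℂ) * f.coeff 6) := by
    linear_combination hV2_1 - hc2_4 - (derivative^[2] f).roots.esymm 1 * hlc2
  have hem2_2 : (derivative^[2] f).roots.esymm 2 * ((42:ℂ) * f.coeff 7) = (20:ℂ) * f.coeff 5 := by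
    linear_combination - hV2_2 + hc2_3 - (derivative^[2] f).roots.esymm 2 * hlc2
  have hem2_3 : (derivative^[2] f).roots.esymm 3 * ((42:ℂ) * f.coeff 7) = -((12:ℂ) * f.coeff 4) := by
    linear_combination hV2_3 - hc2_2 - (derivative^[2] f).roots.esymm 3 * hlc2
  have hem2_4 : (derivative^[2] f).roots.esymm 4 * ((42:ℂ) * f.coeff 7) = (6:ℂ) * f.coeff 3 := by
    linear_combination - hV2_4 + hc2_1 - (derivative^[2] f).roots.esymm 4 * hlc2
  have hem2_5 : (derivative^[2] f).roots.esymm 5 * ((42:ℂ) * f.coeff 7) = -((2:ℂ) * f.coeff 2) := by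
    linear_combination hV2_5 - hc2_0 - (derivative^[2] f).roots.esymm 5 * hlc2
  have hez2_6 : (derivative^[2] f).roots.esymm 6 = 0 := esymm_eq_zero _ (by rw [hcardn2]; norm_num)
  have hez2_7 : (derivative^[2] f).roots.esymm 7 = 0 := esymm_eq_zero _ (by rw [hcardn2]; norm_num)
  have hpm2_0 : msP (derivative^[2] f).roots 0 = 5 := by
    rw [msP_zero_card, hcardn2]; norm_num
  have hpm2_1 : msP (derivative^[2] f).roots 1 * ((7:ℂ) * f.coeff 7) = -(5:ℂ) * f.coeff 6 := by
    linear_combination ((7:ℂ) * f.coeff 7) * newton1 (derivative^[2] f).roots + (((1:ℂ)/6) * (1:ℂ)) * hem2_1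
  have hpm2_2 : msP (derivative^[2] f).roots 2 * ((147:ℂ) * f.coeff 7 ^ 2) = -(140:ℂ) * f.coeff 5 * f.coeff 7 + (75:ℂ) * f.coeff 6 ^ 2 := by
    linear_combination ((147:ℂ) * f.coeff 7 ^ 2) * newton2 (derivative^[2] f).roots + (((7:ℂ)/2) * f.coeff 7 * msP (derivative^[2] f).roots 1) * hem2_1 + ((-15:ℂ) * f.coeff 6 * (1:ℂ)) * hpm2_1 + ((-7:ℂ) * f.coeff 7) * hem2_2
  have hpm2_3 : msP (derivative^[2] f).roots 3 * ((343:ℂ) * f.coeff 7 ^ 3) = -(294:ℂ) * f.coeff 4 * f.coeff 7 ^ 2 + (350:ℂ) * f.coeff 5 * f.coeff 6 * f.coeff 7 - (125:ℂ) * f.coeff 6 ^ 3 := by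
    linear_combination ((343:ℂ) * f.coeff 7 ^ 3) * newton3 (derivative^[2] f).roots + (((49:ℂ)/6) * f.coeff 7 ^ 2 * msP (derivative^[2] f).roots 2) * hem2_1 + (((-5:ℂ)/3) * f.coeff 6 * (1:ℂ)) * hpm2_2 + (((-49:ℂ)/6) * f.coeff 7 ^ 2 * msP (derivative^[2] f).roots 1) * hem2_2 + (((-70:ℂ)/3) * f.coeff 5 * f.coeff 7) * hpm2_1 + (((49:ℂ)/2) * f.coeff 7 ^ 2) * hem2_3
  have hpm2_4 : msP (derivative^[2] f).roots 4 * ((21609:ℂ) * f.coeff 7 ^ 4) = -(12348:ℂ) * f.coeff 3 * f.coeff 7 ^ 3 + (17640:ℂ) * f.coeff 4 * f.coeff 6 * f.coeff 7 ^ 2 + (9800:ℂ) * f.coeff 5 ^ 2 * f.coeff 7 ^ 2 - (21000:ℂ) * f.coeff 5 * f.coeff 6 ^ 2 * f.coeff 7 + (5625:ℂ) * f.coeff 6 ^ 4 := by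
    linear_combination ((21609:ℂ) * f.coeff 7 ^ 4) * newton4 (derivative^[2] f).roots + (((1029:ℂ)/2) * f.coeff 7 ^ 3 * msP (derivative^[2] f).roots 3) * hem2_1 + ((-45:ℂ) * f.coeff 6 * (1:ℂ)) * hpm2_3 + (((-1029:ℂ)/2) * f.coeff 7 ^ 3 * msP (derivative^[2] f).roots 2) * hem2_2 + ((-70:ℂ) * f.coeff 5 * f.coeff 7) * hpm2_2 + (((1029:ℂ)/2) * f.coeff 7 ^ 3 * msP (derivative^[2] f).roots 1) * hem2_3 + ((-882:ℂ) * f.coeff 4 * f.coeff 7 ^ 2) * hpm2_1 + ((-2058:ℂ) * f.coeff 7 ^ 3) * hem2_4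
  have hpm2_5 : msP (derivative^[2] f).roots 5 * ((151263:ℂ) * f.coeff 7 ^ 5) = -(36015:ℂ) * f.coeff 2 * f.coeff 7 ^ 4 + (77175:ℂ) * f.coeff 3 * f.coeff 6 * f.coeff 7 ^ 3 + (102900:ℂ) * f.coeff 4 * f.coeff 5 * f.coeff 7 ^ 3 - (110250:ℂ) * f.coeff 4 * f.coeff 6 ^ 2 * f.coeff 7 ^ 2 - (122500:ℂ) * f.coeff 5 ^ 2 * f.coeff 6 * f.coeff 7 ^ 2 + (131250:ℂ) * f.coeff 5 * f.coeff 6 ^ 3 * f.coeff 7 - (28125:ℂ) * f.coeff 6 ^ 5 := by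
    linear_combination ((151263:ℂ) * f.coeff 7 ^ 5) * newton5 (derivative^[2] f).roots + (((7203:ℂ)/2) * f.coeff 7 ^ 4 * msP (derivative^[2] f).roots 4) * hem2_1 + ((-5:ℂ) * f.coeff 6 * (1:ℂ)) * hpm2_4 + (((-7203:ℂ)/2) * f.coeff 7 ^ 4 * msP (derivative^[2] f).roots 3) * hem2_2 + ((-210:ℂ) * f.coeff 5 * f.coeff 7) * hpm2_3 + (((7203:ℂ)/2) * f.coeff 7 ^ 4 * msP (derivative^[2] f).roots 2) * hem2_3 + ((-294:ℂ) * f.coeff 4 * f.coeff 7 ^ 2) * hpm2_2 + (((-7203:ℂ)/2) * f.coeff 7 ^ 4 * msP (derivative^[2] f).roots 1) * hem2_4 + ((-3087:ℂ) * f.coeff 3 * f.coeff 7 ^ 3) * hpm2_1 + (((36015:ℂ)/2) * f.coeff 7 ^ 4) * hem2_5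
  have hpm2_6 : msP (derivative^[2] f).roots 6 * ((3176523:ℂ) * f.coeff 7 ^ 6) = (648270:ℂ) * f.coeff 2 * f.coeff 6 * f.coeff 7 ^ 4 + (1296540:ℂ) * f.coeff 3 * f.coeff 5 * f.coeff 7 ^ 4 - (1389150:ℂ) * f.coeff 3 * f.coeff 6 ^ 2 * f.coeff 7 ^ 3 + (777924:ℂ) * f.coeff 4 ^ 2 * f.coeff 7 ^ 4 - (3704400:ℂ) * f.coeff 4 * f.coeff 5 * f.coeff 6 * f.coeff 7 ^ 3 + (1984500:ℂ) * f.coeff 4 * f.coeff 6 ^ 3 * f.coeff 7 ^ 2 - (686000:ℂ) * f.coeff 5 ^ 3 * f.coeff 7 ^ 3 + (3307500:ℂ) * f.coeff 5 ^ 2 * f.coeff 6 ^ 2 * f.coeff 7 ^ 2 - (2362500:ℂ) * f.coeff 5 * f.coeff 6 ^ 4 * f.coeff 7 + (421875:ℂ) * f.coeff 6 ^ 6 := by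
    linear_combination ((3176523:ℂ) * f.coeff 7 ^ 6) * newton6 (derivative^[2] f).roots + (((151263:ℂ)/2) * f.coeff 7 ^ 5 * msP (derivative^[2] f).roots 5) * hem2_1 + ((-15:ℂ) * f.coeff 6 * (1:ℂ)) * hpm2_5 + (((-151263:ℂ)/2) * f.coeff 7 ^ 5 * msP (derivative^[2] f).roots 4) * hem2_2 + ((-70:ℂ) * f.coeff 5 * f.coeff 7) * hpm2_4 + (((151263:ℂ)/2) * f.coeff 7 ^ 5 * msP (derivative^[2] f).roots 3) * hem2_3 + ((-2646:ℂ) * f.coeff 4 * f.coeff 7 ^ 2) * hpm2_3 + (((-151263:ℂ)/2) * f.coeff 7 ^ 5 * msP (derivative^[2] f).roots 2) * hem2_4 + ((-3087:ℂ) * f.coeff 3 * f.coeff 7 ^ 3) * hpm2_2 + (((151263:ℂ)/2) * f.coeff 7 ^ 5 * msP (derivative^[2] f).roots 1) * hem2_5 + ((-21609:ℂ) * f.coeff 2 * f.coeff 7 ^ 4) * hpm2_1 + ((-19059138:ℂ) * f.coeff 7 ^ 6) * hez2_6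
  have hpm2_7 : msP (derivative^[2] f).roots 7 * ((22235661:ℂ) * f.coeff 7 ^ 7) = (3529470:ℂ) * f.coeff 2 * f.coeff 5 * f.coeff 7 ^ 5 - (3781575:ℂ) * f.coeff 2 * f.coeff 6 ^ 2 * f.coeff 7 ^ 4 + (6353046:ℂ) * f.coeff 3 * f.coeff 4 * f.coeff 7 ^ 5 - (15126300:ℂ) * f.coeff 3 * f.coeff 5 * f.coeff 6 * f.coeff 7 ^ 4 + (8103375:ℂ) * f.coeff 3 * f.coeff 6 ^ 3 * f.coeff 7 ^ 3 - (9075780:ℂ) * f.coeff 4 ^ 2 * f.coeff 6 * f.coeff 7 ^ 4 - (10084200:ℂ) * f.coeff 4 * f.coeff 5 ^ 2 * f.coeff 7 ^ 4 + (32413500:ℂ) * f.coeff 4 * f.coeff 5 * f.coeff 6 ^ 2 * f.coeff 7 ^ 3 - (11576250:ℂ) * f.coeff 4 * f.coeff 6 ^ 4 * f.coeff 7 ^ 2 + (12005000:ℂ) * f.coeff 5 ^ 3 * f.coeff 6 * f.coeff 7 ^ 3 - (25725000:ℂ) * f.coeff 5 ^ 2 * f.coeff 6 ^ 3 * f.coeff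 7 ^ 2 + (13781250:ℂ) * f.coeff 5 * f.coeff 6 ^ 5 * f.coeff 7 - (2109375:ℂ) * f.coeff 6 ^ 7 := by
    linear_combination ((22235661:ℂ) * f.coeff 7 ^ 7) * newton7 (derivative^[2] f).roots + (((1058841:ℂ)/2) * f.coeff 7 ^ 6 * msP (derivative^[2] f).roots 6) * hem2_1 + ((-5:ℂ) * f.coeff 6 * (1:ℂ)) * hpm2_6 + (((-1058841:ℂ)/2) * f.coeff 7 ^ 6 * msP (derivative^[2] f).roots 5) * hem2_2 + ((-70:ℂ) * f.coeff 5 * f.coeff 7) * hpm2_5 + (((1058841:ℂ)/2) * f.coeff 7 ^ 6 * msP (derivative^[2] f).roots 4) * hem2_3 + ((-294:ℂ) * f.coeff 4 * f.coeff 7 ^ 2) * hpm2_4 + (((-1058841:ℂ)/2) * f.coeff 7 ^ 6 * msP (derivative^[2] f).roots 3) * hem2_4 + ((-9261:ℂ) * f.coeff 3 * f.coeff 7 ^ 3) * hpm2_3 + (((1058841:ℂ)/2) * f.coeff 7 ^ 6 * msP (derivative^[2] f).roots 2) * hem2_5 + ((-7203:ℂ) * f.coeff 2 * f.coeff 7 ^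 4) * hpm2_2 + ((-22235661:ℂ) * f.coeff 7 ^ 7 * msP (derivative^[2] f).roots 1) * hez2_6 + ((155649627:ℂ) * f.coeff 7 ^ 7) * hez2_7
  have hS2 : ((derivative^[2] f).roots.map (fun x => f.eval x)).sum * ((7411887:ℂ) * f.coeff 7 ^ 7) = (37059435:ℂ) * f.coeff 0 * f.coeff 7 ^ 7 - (5294205:ℂ) * f.coeff 1 * f.coeff 6 * f.coeff 7 ^ 6 - (7647185:ℂ) * f.coeff 2 * f.coeff 5 * f.coeff 7 ^ 6 + (4033680:ℂ) * f.coeff 2 * f.coeff 6 ^ 2 * f.coeff 7 ^ 5 - (8470728:ℂ) * f.coeff 3 * f.coeff 4 * f.coeff 7 ^ 6 + (9327885:ℂ) * f.coeff 3 * f.coeff 5 * f.coeff 6 * f.coeff 7 ^ 5 - (3241350:ℂ) * f.coeff 3 * f.coeff 6 ^ 3 * f.coeff 7 ^ 4 + (4840416:ℂ) * f.coeff 4 ^ 2 * f.coeff 6 * f.coeff 7 ^ 5 + (5042100:ℂ) * f.coeff 4 * f.coeff 5 ^ 2 * f.coeff 7 ^ 5 - (10444350:ℂ) * f.coeff 4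 * f.coeff 5 * f.coeff 6 ^ 2 * f.coeff 7 ^ 4 + (2701125:ℂ) * f.coeff 4 * f.coeff 6 ^ 4 * f.coeff 7 ^ 3 - (3601500:ℂ) * f.coeff 5 ^ 3 * f.coeff 6 * f.coeff 7 ^ 4 + (5573750:ℂ) * f.coeff 5 ^ 2 * f.coeff 6 ^ 3 * f.coeff 7 ^ 3 - (2296875:ℂ) * f.coeff 5 * f.coeff 6 ^ 5 * f.coeff 7 ^ 2 + (281250:ℂ) * f.coeff 6 ^ 7 * f.coeff 7 := by
    rw [sum_map_eval f hnd]
    linear_combination ((7411887:ℂ) * f.coeff 7 ^ 7 * f.coeff 0) * hpm2_0 + ((1058841:ℂ) * f.coeff 1 * f.coeff 7 ^ 6) * hpm2_1 + ((50421:ℂ) * f.coeff 2 * f.coeff 7 ^ 5) * hpm2_2 + ((21609:ℂ) * f.coeff 3 * f.coeff 7 ^ 4) * hpm2_3 + ((343:ℂ) * f.coeff 4 * f.coeff 7 ^ 3) * hpm2_4 + ((49:ℂ) * f.coeff 5 * f.coeff 7 ^ 2) * hpm2_5 + (((7:ℂ)/3) * f.coeff 6 * f.coeff 7) * hpm2_6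 + (((1:ℂ)/3) * f.coeff 7 * (1:ℂ)) * hpm2_7
  have hc3_0 : (derivative^[3] f).coeff 0 = (6:ℂ) * f.coeff 3 := by
    rw [coeff_iterate_derivative]; norm_num [Nat.descFactorial]
  have hc3_1 : (derivative^[3] f).coeff 1 = (24:ℂ) * f.coeff 4 := by
    rw [coeff_iterate_derivative]; norm_num [Nat.descFactorial]
  have hc3_2 : (derivative^[3] f).coeff 2 = (60:ℂ) * f.coeff 5 := by
    rw [coeff_iterate_derivative]; norm_num [Nat.descFactorial]
  have hc3_3 : (derivative^[3] f).coeff 3 = (120:ℂ) * f.coeff 6 := by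
    rw [coeff_iterate_derivative]; norm_num [Nat.descFactorial]
  have hc3_4 : (derivative^[3] f).coeff 4 = (210:ℂ) * f.coeff 7 := by
    rw [coeff_iterate_derivative]; norm_num [Nat.descFactorial]
  have hndg3 : (derivative^[3] f).natDegree = 4 := by
    refine le_antisymm ?_ (le_natDegree_of_ne_zero (n := 4) ?_)
    · have := natDegree_iterate_derivative f 3
      rwa [hnd] at this
    · rw [hc3_4]; exact mul_ne_zero (by norm_num) ha7
  have hcard3 : Multiset.card (derivative^[3] f).roots = (derivative^[3] f).natDegree :=
    (splits_iff_card_roots).mp (IsAlgClosed.splits _)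
  have hcardn3 : Multiset.card (derivative^[3] f).roots = 4 := by rw [hcard3, hndg3]
  have hlc3 : (derivative^[3] f).leadingCoeff = (210:ℂ) * f.coeff 7 := by
    rw [leadingCoeff, hndg3, hc3_4]
  have hV3_1 : (derivative^[3] f).coeff 3 = (derivative^[3] f).leadingCoeff * (-1) ^ 1 * (derivative^[3] f).roots.esymm 1 := by
    have h := Polynomial.coeff_eq_esymm_roots_of_card hcard3 (k := 3) (by rw [hndg3]; norm_num)
    rwa [hndg3] at h
  have hV3_2 : (derivative^[3] f).coeff 2 = (derivative^[3] f).leadingCoeff * (-1) ^ 2 * (derivative^[3] f).roots.esymm 2 := by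
    have h := Polynomial.coeff_eq_esymm_roots_of_card hcard3 (k := 2) (by rw [hndg3]; norm_num)
    rwa [hndg3] at h
  have hV3_3 : (derivative^[3] f).coeff 1 = (derivative^[3] f).leadingCoeff * (-1) ^ 3 * (derivative^[3] f).roots.esymm 3 := by
    have h := Polynomial.coeff_eq_esymm_roots_of_card hcard3 (k := 1) (by rw [hndg3]; norm_num)
    rwa [hndg3] at h
  have hV3_4 : (derivative^[3] f).coeff 0 = (derivative^[3] f).leadingCoeff * (-1) ^ 4 * (derivative^[3] f).roots.esymm 4 := by
    have h := Polynomial.coeff_eq_esymm_roots_of_card hcard3 (k := 0) (by rw [hndg3]; norm_num)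
    rwa [hndg3] at h
  have hem3_1 : (derivative^[3] f).roots.esymm 1 * ((210:ℂ) * f.coeff 7) = -((120:ℂ) * f.coeff 6) := by
    linear_combination hV3_1 - hc3_3 - (derivative^[3] f).roots.esymm 1 * hlc3
  have hem3_2 : (derivative^[3] f).roots.esymm 2 * ((210:ℂ) * f.coeff 7) = (60:ℂ) * f.coeff 5 := by
    linear_combination - hV3_2 + hc3_2 - (derivative^[3] f).roots.esymm 2 * hlc3
  have hem3_3 : (derivative^[3] f).roots.esymm 3 * ((210:ℂ) * f.coeff 7) = -((24:ℂ) * f.coeff 4) := by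
    linear_combination hV3_3 - hc3_1 - (derivative^[3] f).roots.esymm 3 * hlc3
  have hem3_4 : (derivative^[3] f).roots.esymm 4 * ((210:ℂ) * f.coeff 7) = (6:ℂ) * f.coeff 3 := by
    linear_combination - hV3_4 + hc3_0 - (derivative^[3] f).roots.esymm 4 * hlc3
  have hez3_5 : (derivative^[3] f).roots.esymm 5 = 0 := esymm_eq_zero _ (by rw [hcardn3]; norm_num)
  have hez3_6 : (derivative^[3] f).roots.esymm 6 = 0 := esymm_eq_zero _ (by rw [hcardn3]; norm_num)
  have hez3_7 : (derivative^[3] f).roots.esymm 7 = 0 := esymm_eq_zero _ (by rw [hcardn3]; norm_num)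
  have hpm3_0 : msP (derivative^[3] f).roots 0 = 4 := by
    rw [msP_zero_card, hcardn3]; norm_num
  have hpm3_1 : msP (derivative^[3] f).roots 1 * ((7:ℂ) * f.coeff 7) = -(4:ℂ) * f.coeff 6 := by
    linear_combination ((7:ℂ) * f.coeff 7) * newton1 (derivative^[3] f).roots + (((1:ℂ)/30) * (1:ℂ)) * hem3_1
  have hpm3_2 : msP (derivative^[3] f).roots 2 * ((49:ℂ) * f.coeff 7 ^ 2) = -(28:ℂ) * f.coeff 5 * f.coeff 7 + (16:ℂ) * f.coeff 6 ^ 2 := by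
    linear_combination ((49:ℂ) * f.coeff 7 ^ 2) * newton2 (derivative^[3] f).roots + (((7:ℂ)/30) * f.coeff 7 * msP (derivative^[3] f).roots 1) * hem3_1 + ((-4:ℂ) * f.coeff 6 * (1:ℂ)) * hpm3_1 + (((-7:ℂ)/15) * f.coeff 7) * hem3_2
  have hpm3_3 : msP (derivative^[3] f).roots 3 * ((1715:ℂ) * f.coeff 7 ^ 3) = -(588:ℂ) * f.coeff 4 * f.coeff 7 ^ 2 + (840:ℂ) * f.coeff 5 * f.coeff 6 * f.coeff 7 - (320:ℂ) * f.coeff 6 ^ 3 := by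
    linear_combination ((1715:ℂ) * f.coeff 7 ^ 3) * newton3 (derivative^[3] f).roots + (((49:ℂ)/6) * f.coeff 7 ^ 2 * msP (derivative^[3] f).roots 2) * hem3_1 + ((-20:ℂ) * f.coeff 6 * (1:ℂ)) * hpm3_2 + (((-49:ℂ)/6) * f.coeff 7 ^ 2 * msP (derivative^[3] f).roots 1) * hem3_2 + ((-70:ℂ) * f.coeff 5 * f.coeff 7) * hpm3_1 + (((49:ℂ)/2) * f.coeff 7 ^ 2) * hem3_3
  have hpm3_4 : msP (derivative^[3] f).roots 4 * ((12005:ℂ) * f.coeff 7 ^ 4) = -(1372:ℂ) * f.coeff 3 * f.coeff 7 ^ 3 + (3136:ℂ) * f.coeff 4 * f.coeff 6 * f.coeff 7 ^ 2 + (1960:ℂ) * f.coeff 5 ^ 2 * f.coeff 7 ^ 2 - (4480:ℂ) * f.coeff 5 * f.coeff 6 ^ 2 * f.coeff 7 + (1280:ℂ) * f.coeff 6 ^ 4 := by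
    linear_combination ((12005:ℂ) * f.coeff 7 ^ 4) * newton4 (derivative^[3] f).roots + (((343:ℂ)/6) * f.coeff 7 ^ 3 * msP (derivative^[3] f).roots 3) * hem3_1 + ((-4:ℂ) * f.coeff 6 * (1:ℂ)) * hpm3_3 + (((-343:ℂ)/6) * f.coeff 7 ^ 3 * msP (derivative^[3] f).roots 2) * hem3_2 + ((-70:ℂ) * f.coeff 5 * f.coeff 7) * hpm3_2 + (((343:ℂ)/6) * f.coeff 7 ^ 3 * msP (derivative^[3] f).roots 1) * hem3_3 + ((-196:ℂ) * f.coeff 4 * f.coeff 7 ^ 2) * hpm3_1 + (((-686:ℂ)/3) * f.coeff 7 ^ 3) * hem3_4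
  have hpm3_5 : msP (derivative^[3] f).roots 5 * ((16807:ℂ) * f.coeff 7 ^ 5) = (1372:ℂ) * f.coeff 3 * f.coeff 6 * f.coeff 7 ^ 3 + (2744:ℂ) * f.coeff 4 * f.coeff 5 * f.coeff 7 ^ 3 - (3136:ℂ) * f.coeff 4 * f.coeff 6 ^ 2 * f.coeff 7 ^ 2 - (3920:ℂ) * f.coeff 5 ^ 2 * f.coeff 6 * f.coeff 7 ^ 2 + (4480:ℂ) * f.coeff 5 * f.coeff 6 ^ 3 * f.coeff 7 - (1024:ℂ) * f.coeff 6 ^ 5 := by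
    linear_combination ((16807:ℂ) * f.coeff 7 ^ 5) * newton5 (derivative^[3] f).roots + (((2401:ℂ)/30) * f.coeff 7 ^ 4 * msP (derivative^[3] f).roots 4) * hem3_1 + (((-4:ℂ)/5) * f.coeff 6 * (1:ℂ)) * hpm3_4 + (((-2401:ℂ)/30) * f.coeff 7 ^ 4 * msP (derivative^[3] f).roots 3) * hem3_2 + (((-14:ℂ)/5) * f.coeff 5 * f.coeff 7) * hpm3_3 + (((2401:ℂ)/30) * f.coeff 7 ^ 4 * msP (derivative^[3] f).roots 2) * hem3_3 + (((-196:ℂ)/5) * f.coeff 4 * f.coeff 7 ^ 2) * hpm3_2 + (((-2401:ℂ)/30) * f.coeff 7 ^ 4 * msP (derivative^[3] f).roots 1) * hem3_4 + (((-343:ℂ)/5) * f.coeff 3 * f.coeff 7 ^ 3) * hpm3_1 + ((84035:ℂ) * f.coeff 7 ^ 5) * hez3_5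
  have hpm3_6 : msP (derivative^[3] f).roots 6 * ((2941225:ℂ) * f.coeff 7 ^ 6) = (144060:ℂ) * f.coeff 3 * f.coeff 5 * f.coeff 7 ^ 4 - (164640:ℂ) * f.coeff 3 * f.coeff 6 ^ 2 * f.coeff 7 ^ 3 + (115248:ℂ) * f.coeff 4 ^ 2 * f.coeff 7 ^ 4 - (658560:ℂ) * f.coeff 4 * f.coeff 5 * f.coeff 6 * f.coeff 7 ^ 3 + (376320:ℂ) * f.coeff 4 * f.coeff 6 ^ 3 * f.coeff 7 ^ 2 - (137200:ℂ) * f.coeff 5 ^ 3 * f.coeff 7 ^ 3 + (705600:ℂ) * f.coeff 5 ^ 2 * f.coeff 6 ^ 2 * f.coeff 7 ^ 2 - (537600:ℂ) * f.coeff 5 * f.coeff 6 ^ 4 * f.coeff 7 + (102400:ℂ) * f.coeff 6 ^ 6 := by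
    linear_combination ((2941225:ℂ) * f.coeff 7 ^ 6) * newton6 (derivative^[3] f).roots + (((84035:ℂ)/6) * f.coeff 7 ^ 5 * msP (derivative^[3] f).roots 5) * hem3_1 + ((-100:ℂ) * f.coeff 6 * (1:ℂ)) * hpm3_5 + (((-84035:ℂ)/6) * f.coeff 7 ^ 5 * msP (derivative^[3] f).roots 4) * hem3_2 + ((-70:ℂ) * f.coeff 5 * f.coeff 7) * hpm3_4 + (((84035:ℂ)/6) * f.coeff 7 ^ 5 * msP (derivative^[3] f).roots 3) * hem3_3 + ((-196:ℂ) * f.coeff 4 * f.coeff 7 ^ 2) * hpm3_3 + (((-84035:ℂ)/6) * f.coeff 7 ^ 5 * msP (derivative^[3] f).roots 2) * hem3_4 + ((-1715:ℂ) * f.coeff 3 * f.coeff 7 ^ 3) * hpm3_2 + ((2941225:ℂ) * f.coeff 7 ^ 6 * msP (derivative^[3] f).roots 1) * hez3_5 + ((-17647350:ℂ) * f.coeff 7 ^ 6) * hez3_6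
  have hpm3_7 : msP (derivative^[3] f).roots 7 * ((20588575:ℂ) * f.coeff 7 ^ 7) = (470596:ℂ) * f.coeff 3 * f.coeff 4 * f.coeff 7 ^ 5 - (1344560:ℂ) * f.coeff 3 * f.coeff 5 * f.coeff 6 * f.coeff 7 ^ 4 + (768320:ℂ) * f.coeff 3 * f.coeff 6 ^ 3 * f.coeff 7 ^ 3 - (1075648:ℂ) * f.coeff 4 ^ 2 * f.coeff 6 * f.coeff 7 ^ 4 - (1344560:ℂ) * f.coeff 4 * f.coeff 5 ^ 2 * f.coeff 7 ^ 4 + (4609920:ℂ) * f.coeff 4 * f.coeff 5 * f.coeff 6 ^ 2 * f.coeff 7 ^ 3 - (1756160:ℂ) * f.coeff 4 * f.coeff 6 ^ 4 * f.coeff 7 ^ 2 + (1920800:ℂ) * f.coeff 5 ^ 3 * f.coeff 6 * f.coeff 7 ^ 3 - (4390400:ℂ) * f.coeff 5 ^ 2 * f.coeff 6 ^ 3 * f.coeff 7 ^ 2 + (2508800:ℂ) * f.coeff 5 * f.coeff 6 ^ 5 * f.coeff 7 - (409600:ℂ) * f.coeff 6 ^ 7 := by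
    linear_combination ((20588575:ℂ) * f.coeff 7 ^ 7) * newton7 (derivative^[3] f).roots + (((588245:ℂ)/6) * f.coeff 7 ^ 6 * msP (derivative^[3] f).roots 6) * hem3_1 + ((-4:ℂ) * f.coeff 6 * (1:ℂ)) * hpm3_6 + (((-588245:ℂ)/6) * f.coeff 7 ^ 6 * msP (derivative^[3] f).roots 5) * hem3_2 + ((-350:ℂ) * f.coeff 5 * f.coeff 7) * hpm3_5 + (((588245:ℂ)/6) * f.coeff 7 ^ 6 * msP (derivative^[3] f).roots 4) * hem3_3 + ((-196:ℂ) * f.coeff 4 * f.coeff 7 ^ 2) * hpm3_4 + (((-588245:ℂ)/6) * f.coeff 7 ^ 6 * msP (derivative^[3] f).roots 3) * hem3_4 + ((-343:ℂ) * f.coeff 3 * f.coeff 7 ^ 3) * hpm3_3 + ((20588575:ℂ) * f.coeff 7 ^ 7 * msP (derivative^[3] f).roots 2) * hez3_5 + ((-20588575:ℂ) * f.coeff 7 ^ 7 * msP (derivative^[3] f).roots 1) * hez3_6 + ((144120025:ℂ) * f.coeff 7 ^ 7) * hez3_7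
  have hS3 : ((derivative^[3] f).roots.map (fun x => f.eval x)).sum * ((20588575:ℂ) * f.coeff 7 ^ 7) = (82354300:ℂ) * f.coeff 0 * f.coeff 7 ^ 7 - (11764900:ℂ) * f.coeff 1 * f.coeff 6 * f.coeff 7 ^ 6 - (11764900:ℂ) * f.coeff 2 * f.coeff 5 * f.coeff 7 ^ 6 + (6722800:ℂ) * f.coeff 2 * f.coeff 6 ^ 2 * f.coeff 7 ^ 5 - (8941324:ℂ) * f.coeff 3 * f.coeff 4 * f.coeff 7 ^ 6 + (11428760:ℂ) * f.coeff 3 * f.coeff 5 * f.coeff 6 * f.coeff 7 ^ 5 - (4225760:ℂ) * f.coeff 3 * f.coeff 6 ^ 3 * f.coeff 7 ^ 4 + (5109328:ℂ) * f.coeff 4 ^ 2 * f.coeff 6 * f.coeff 7 ^ 5 + (5378240:ℂ) * f.coeff 4 * f.coeff 5 ^ 2 * f.coeff 7 ^ 5 - (11524800:ℂ) * f.coeff 4 * f.coeff 5 * f.coeff 6 ^ 2 * f.coeff 7 ^ 4 + (3073280:ℂ) * f.coeff 4 * f.coeff 6 ^ 4 * f.coeff 7 ^ 3 - (3841600:ℂ)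 * f.coeff 5 ^ 3 * f.coeff 6 * f.coeff 7 ^ 4 + (6036800:ℂ) * f.coeff 5 ^ 2 * f.coeff 6 ^ 3 * f.coeff 7 ^ 3 - (2508800:ℂ) * f.coeff 5 * f.coeff 6 ^ 5 * f.coeff 7 ^ 2 + (307200:ℂ) * f.coeff 6 ^ 7 * f.coeff 7 := by
    rw [sum_map_eval f hnd]
    linear_combination ((20588575:ℂ) * f.coeff 7 ^ 7 * f.coeff 0) * hpm3_0 + ((2941225:ℂ) * f.coeff 1 * f.coeff 7 ^ 6) * hpm3_1 + ((420175:ℂ) * f.coeff 2 * f.coeff 7 ^ 5) * hpm3_2 + ((12005:ℂ) * f.coeff 3 * f.coeff 7 ^ 4) * hpm3_3 + ((1715:ℂ) * f.coeff 4 * f.coeff 7 ^ 3) * hpm3_4 + ((1225:ℂ) * f.coeff 5 * f.coeff 7 ^ 2) * hpm3_5 + ((7:ℂ) * f.coeff 6 * f.coeff 7) * hpm3_6 + ((1:ℂ) * f.coeff 7 * (1:ℂ)) * hpm3_7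
  have hc4_0 : (derivative^[4] f).coeff 0 = (24:ℂ) * f.coeff 4 := by
    rw [coeff_iterate_derivative]; norm_num [Nat.descFactorial]
  have hc4_1 : (derivative^[4] f).coeff 1 = (120:ℂ) * f.coeff 5 := by
    rw [coeff_iterate_derivative]; norm_num [Nat.descFactorial]
  have hc4_2 : (derivative^[4] f).coeff 2 = (360:ℂ) * f.coeff 6 := by
    rw [coeff_iterate_derivative]; norm_num [Nat.descFactorial]
  have hc4_3 : (derivative^[4] f).coeff 3 = (840:ℂ) * f.coeff 7 := by
    rw [coeff_iterate_derivative]; norm_num [Nat.descFactorial]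
  have hndg4 : (derivative^[4] f).natDegree = 3 := by
    refine le_antisymm ?_ (le_natDegree_of_ne_zero (n := 3) ?_)
    · have := natDegree_iterate_derivative f 4
      rwa [hnd] at this
    · rw [hc4_3]; exact mul_ne_zero (by norm_num) ha7
  have hcard4 : Multiset.card (derivative^[4] f).roots = (derivative^[4] f).natDegree :=
    (splits_iff_card_roots).mp (IsAlgClosed.splits _)
  have hcardn4 : Multiset.card (derivative^[4] f).roots = 3 := by rw [hcard4, hndg4]
  have hlc4 : (derivative^[4] f).leadingCoeff = (840:ℂ) * f.coeff 7 := by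
    rw [leadingCoeff, hndg4, hc4_3]
  have hV4_1 : (derivative^[4] f).coeff 2 = (derivative^[4] f).leadingCoeff * (-1) ^ 1 * (derivative^[4] f).roots.esymm 1 := by
    have h := Polynomial.coeff_eq_esymm_roots_of_card hcard4 (k := 2) (by rw [hndg4]; norm_num)
    rwa [hndg4] at h
  have hV4_2 : (derivative^[4] f).coeff 1 = (derivative^[4] f).leadingCoeff * (-1) ^ 2 * (derivative^[4] f).roots.esymm 2 := by
    have h := Polynomial.coeff_eq_esymm_roots_of_card hcard4 (k := 1) (by rw [hndg4]; norm_num)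
    rwa [hndg4] at h
  have hV4_3 : (derivative^[4] f).coeff 0 = (derivative^[4] f).leadingCoeff * (-1) ^ 3 * (derivative^[4] f).roots.esymm 3 := by
    have h := Polynomial.coeff_eq_esymm_roots_of_card hcard4 (k := 0) (by rw [hndg4]; norm_num)
    rwa [hndg4] at h
  have hem4_1 : (derivative^[4] f).roots.esymm 1 * ((840:ℂ) * f.coeff 7) = -((360:ℂ) * f.coeff 6) := by
    linear_combination hV4_1 - hc4_2 - (derivative^[4] f).roots.esymm 1 * hlc4
  have hem4_2 : (derivative^[4] f).roots.esymm 2 * ((840:ℂ) * f.coeff 7) = (120:ℂ) * f.coeff 5 := by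
    linear_combination - hV4_2 + hc4_1 - (derivative^[4] f).roots.esymm 2 * hlc4
  have hem4_3 : (derivative^[4] f).roots.esymm 3 * ((840:ℂ) * f.coeff 7) = -((24:ℂ) * f.coeff 4) := by
    linear_combination hV4_3 - hc4_0 - (derivative^[4] f).roots.esymm 3 * hlc4
  have hez4_4 : (derivative^[4] f).roots.esymm 4 = 0 := esymm_eq_zero _ (by rw [hcardn4]; norm_num)
  have hez4_5 : (derivative^[4] f).roots.esymm 5 = 0 := esymm_eq_zero _ (by rw [hcardn4]; norm_num)
  have hez4_6 : (derivative^[4] f).roots.esymm 6 = 0 := esymm_eq_zero _ (by rw [hcardn4]; norm_num)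
  have hez4_7 : (derivative^[4] f).roots.esymm 7 = 0 := esymm_eq_zero _ (by rw [hcardn4]; norm_num)
  have hpm4_0 : msP (derivative^[4] f).roots 0 = 3 := by
    rw [msP_zero_card, hcardn4]; norm_num
  have hpm4_1 : msP (derivative^[4] f).roots 1 * ((7:ℂ) * f.coeff 7) = -(3:ℂ) * f.coeff 6 := by
    linear_combination ((7:ℂ) * f.coeff 7) * newton1 (derivative^[4] f).roots + (((1:ℂ)/120) * (1:ℂ)) * hem4_1
  have hpm4_2 : msP (derivative^[4] f).roots 2 * ((49:ℂ) * f.coeff 7 ^ 2) = -(14:ℂ) * f.coeff 5 * f.coeff 7 + (9:ℂ) * f.coeff 6 ^ 2 := by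
    linear_combination ((49:ℂ) * f.coeff 7 ^ 2) * newton2 (derivative^[4] f).roots + (((7:ℂ)/120) * f.coeff 7 * msP (derivative^[4] f).roots 1) * hem4_1 + ((-3:ℂ) * f.coeff 6 * (1:ℂ)) * hpm4_1 + (((-7:ℂ)/60) * f.coeff 7) * hem4_2
  have hpm4_3 : msP (derivative^[4] f).roots 3 * ((1715:ℂ) * f.coeff 7 ^ 3) = -(147:ℂ) * f.coeff 4 * f.coeff 7 ^ 2 + (315:ℂ) * f.coeff 5 * f.coeff 6 * f.coeff 7 - (135:ℂ) * f.coeff 6 ^ 3 := by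
    linear_combination ((1715:ℂ) * f.coeff 7 ^ 3) * newton3 (derivative^[4] f).roots + (((49:ℂ)/24) * f.coeff 7 ^ 2 * msP (derivative^[4] f).roots 2) * hem4_1 + ((-15:ℂ) * f.coeff 6 * (1:ℂ)) * hpm4_2 + (((-49:ℂ)/24) * f.coeff 7 ^ 2 * msP (derivative^[4] f).roots 1) * hem4_2 + ((-35:ℂ) * f.coeff 5 * f.coeff 7) * hpm4_1 + (((49:ℂ)/8) * f.coeff 7 ^ 2) * hem4_3
  have hpm4_4 : msP (derivative^[4] f).roots 4 * ((12005:ℂ) * f.coeff 7 ^ 4) = (588:ℂ) * f.coeff 4 * f.coeff 6 * f.coeff 7 ^ 2 + (490:ℂ) * f.coeff 5 ^ 2 * f.coeff 7 ^ 2 - (1260:ℂ) * f.coeff 5 * f.coeff 6 ^ 2 * f.coeff 7 + (405:ℂ) * f.coeff 6 ^ 4 := by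
    linear_combination ((12005:ℂ) * f.coeff 7 ^ 4) * newton4 (derivative^[4] f).roots + (((343:ℂ)/24) * f.coeff 7 ^ 3 * msP (derivative^[4] f).roots 3) * hem4_1 + ((-3:ℂ) * f.coeff 6 * (1:ℂ)) * hpm4_3 + (((-343:ℂ)/24) * f.coeff 7 ^ 3 * msP (derivative^[4] f).roots 2) * hem4_2 + ((-35:ℂ) * f.coeff 5 * f.coeff 7) * hpm4_2 + (((343:ℂ)/24) * f.coeff 7 ^ 3 * msP (derivative^[4] f).roots 1) * hem4_3 + ((-49:ℂ) * f.coeff 4 * f.coeff 7 ^ 2) * hpm4_1 + ((-48020:ℂ) * f.coeff 7 ^ 4) * hez4_4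
  have hpm4_5 : msP (derivative^[4] f).roots 5 * ((16807:ℂ) * f.coeff 7 ^ 5) = (343:ℂ) * f.coeff 4 * f.coeff 5 * f.coeff 7 ^ 3 - (441:ℂ) * f.coeff 4 * f.coeff 6 ^ 2 * f.coeff 7 ^ 2 - (735:ℂ) * f.coeff 5 ^ 2 * f.coeff 6 * f.coeff 7 ^ 2 + (945:ℂ) * f.coeff 5 * f.coeff 6 ^ 3 * f.coeff 7 - (243:ℂ) * f.coeff 6 ^ 5 := by
    linear_combination ((16807:ℂ) * f.coeff 7 ^ 5) * newton5 (derivative^[4] f).roots + (((2401:ℂ)/120) * f.coeff 7 ^ 4 * msP (derivative^[4] f).roots 4) * hem4_1 + (((-3:ℂ)/5) * f.coeff 6 * (1:ℂ)) * hpm4_4 + (((-2401:ℂ)/120) * f.coeff 7 ^ 4 * msP (derivative^[4] f).roots 3) * hem4_2 + (((-7:ℂ)/5) * f.coeff 5 * f.coeff 7) * hpm4_3 + (((2401:ℂ)/120) * f.coeff 7 ^ 4 * msP (derivative^[4] f).roots 2) * hem4_3 + (((-49:ℂ)/5) * f.coeff 4 * f.coeff 7 ^ 2) * hpm4_2 +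 ((-16807:ℂ) * f.coeff 7 ^ 5 * msP (derivative^[4] f).roots 1) * hez4_4 + ((84035:ℂ) * f.coeff 7 ^ 5) * hez4_5
  have hpm4_6 : msP (derivative^[4] f).roots 6 * ((2941225:ℂ) * f.coeff 7 ^ 6) = (7203:ℂ) * f.coeff 4 ^ 2 * f.coeff 7 ^ 4 - (61740:ℂ) * f.coeff 4 * f.coeff 5 * f.coeff 6 * f.coeff 7 ^ 3 + (39690:ℂ) * f.coeff 4 * f.coeff 6 ^ 3 * f.coeff 7 ^ 2 - (17150:ℂ) * f.coeff 5 ^ 3 * f.coeff 7 ^ 3 + (99225:ℂ) * f.coeff 5 ^ 2 * f.coeff 6 ^ 2 * f.coeff 7 ^ 2 - (85050:ℂ) * f.coeff 5 * f.coeff 6 ^ 4 * f.coeff 7 + (18225:ℂ) * f.coeff 6 ^ 6 := by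
    linear_combination ((2941225:ℂ) * f.coeff 7 ^ 6) * newton6 (derivative^[4] f).roots + (((84035:ℂ)/24) * f.coeff 7 ^ 5 * msP (derivative^[4] f).roots 5) * hem4_1 + ((-75:ℂ) * f.coeff 6 * (1:ℂ)) * hpm4_5 + (((-84035:ℂ)/24) * f.coeff 7 ^ 5 * msP (derivative^[4] f).roots 4) * hem4_2 + ((-35:ℂ) * f.coeff 5 * f.coeff 7) * hpm4_4 + (((84035:ℂ)/24) * f.coeff 7 ^ 5 * msP (derivative^[4] f).roots 3) * hem4_3 + ((-49:ℂ) * f.coeff 4 * f.coeff 7 ^ 2) * hpm4_3 + ((-2941225:ℂ) * f.coeff 7 ^ 6 * msP (derivative^[4] f).roots 2) * hez4_4 + ((2941225:ℂ) * f.coeff 7 ^ 6 * msP (derivative^[4] f).roots 1) * hez4_5 + ((-17647350:ℂ) * f.coeff 7 ^ 6) * hez4_6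
  have hpm4_7 : msP (derivative^[4] f).roots 7 * ((20588575:ℂ) * f.coeff 7 ^ 7) = -(50421:ℂ) * f.coeff 4 ^ 2 * f.coeff 6 * f.coeff 7 ^ 4 - (84035:ℂ) * f.coeff 4 * f.coeff 5 ^ 2 * f.coeff 7 ^ 4 + (324135:ℂ) * f.coeff 4 * f.coeff 5 * f.coeff 6 ^ 2 * f.coeff 7 ^ 3 - (138915:ℂ) * f.coeff 4 * f.coeff 6 ^ 4 * f.coeff 7 ^ 2 + (180075:ℂ) * f.coeff 5 ^ 3 * f.coeff 6 * f.coeff 7 ^ 3 - (463050:ℂ) * f.coeff 5 ^ 2 * f.coeff 6 ^ 3 * f.coeff 7 ^ 2 + (297675:ℂ) * f.coeff 5 * f.coeff 6 ^ 5 * f.coeff 7 - (54675:ℂ) * f.coeff 6 ^ 7 := by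
    linear_combination ((20588575:ℂ) * f.coeff 7 ^ 7) * newton7 (derivative^[4] f).roots + (((588245:ℂ)/24) * f.coeff 7 ^ 6 * msP (derivative^[4] f).roots 6) * hem4_1 + ((-3:ℂ) * f.coeff 6 * (1:ℂ)) * hpm4_6 + (((-588245:ℂ)/24) * f.coeff 7 ^ 6 * msP (derivative^[4] f).roots 5) * hem4_2 + ((-175:ℂ) * f.coeff 5 * f.coeff 7) * hpm4_5 + (((588245:ℂ)/24) * f.coeff 7 ^ 6 * msP (derivative^[4] f).roots 4) * hem4_3 + ((-49:ℂ) * f.coeff 4 * f.coeff 7 ^ 2) * hpm4_4 + ((-20588575:ℂ) * f.coeff 7 ^ 7 * msP (derivative^[4] f).roots 3) * hez4_4 + ((20588575:ℂ) * f.coeff 7 ^ 7 * msP (derivative^[4] f).roots 2) * hez4_5 + ((-20588575:ℂ) * f.coeff 7 ^ 7 * msP (derivative^[4] f).roots 1) * hez4_6 + ((144120025:ℂ) * f.coeff 7 ^ 7) * hez4_7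
  have hS4 : ((derivative^[4] f).roots.map (fun x => f.eval x)).sum * ((4117715:ℂ) * f.coeff 7 ^ 7) = (12353145:ℂ) * f.coeff 0 * f.coeff 7 ^ 7 - (1764735:ℂ) * f.coeff 1 * f.coeff 6 * f.coeff 7 ^ 6 - (1176490:ℂ) * f.coeff 2 * f.coeff 5 * f.coeff 7 ^ 6 + (756315:ℂ) * f.coeff 2 * f.coeff 6 ^ 2 * f.coeff 7 ^ 5 - (352947:ℂ) * f.coeff 3 * f.coeff 4 * f.coeff 7 ^ 6 + (756315:ℂ) * f.coeff 3 * f.coeff 5 * f.coeff 6 * f.coeff 7 ^ 5 - (324135:ℂ) * f.coeff 3 * f.coeff 6 ^ 3 * f.coeff 7 ^ 4 + (201684:ℂ) * f.coeff 4 ^ 2 * f.coeff 6 * f.coeff 7 ^ 5 + (235298:ℂ) * f.coeff 4 * f.coeff 5 ^ 2 * f.coeff 7 ^ 5 - (561834:ℂ) * f.coeff 4 * f.coeff 5 * f.coeff 6 ^ 2 * f.coeff 7 ^ 4 + (166698:ℂ) * f.coeff 4 * f.coeff 6 ^ 4 * f.coeff 7 ^ 3 - (168070:ℂ) * f.coeff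 5 ^ 3 * f.coeff 6 * f.coeff 7 ^ 4 + (277830:ℂ) * f.coeff 5 ^ 2 * f.coeff 6 ^ 3 * f.coeff 7 ^ 3 - (119070:ℂ) * f.coeff 5 * f.coeff 6 ^ 5 * f.coeff 7 ^ 2 + (14580:ℂ) * f.coeff 6 ^ 7 * f.coeff 7 := by
    rw [sum_map_eval f hnd]
    linear_combination ((4117715:ℂ) * f.coeff 7 ^ 7 * f.coeff 0) * hpm4_0 + ((588245:ℂ) * f.coeff 1 * f.coeff 7 ^ 6) * hpm4_1 + ((84035:ℂ) * f.coeff 2 * f.coeff 7 ^ 5) * hpm4_2 + ((2401:ℂ) * f.coeff 3 * f.coeff 7 ^ 4) * hpm4_3 + ((343:ℂ) * f.coeff 4 * f.coeff 7 ^ 3) * hpm4_4 + ((245:ℂ) * f.coeff 5 * f.coeff 7 ^ 2) * hpm4_5 + (((7:ℂ)/5) * f.coeff 6 * f.coeff 7) * hpm4_6 + (((1:ℂ)/5) * f.coeff 7 * (1:ℂ)) * hpm4_7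
  have hc5_0 : (derivative^[5] f).coeff 0 = (120:ℂ) * f.coeff 5 := by
    rw [coeff_iterate_derivative]; norm_num [Nat.descFactorial]
  have hc5_1 : (derivative^[5] f).coeff 1 = (720:ℂ) * f.coeff 6 := by
    rw [coeff_iterate_derivative]; norm_num [Nat.descFactorial]
  have hc5_2 : (derivative^[5] f).coeff 2 = (2520:ℂ) * f.coeff 7 := by
    rw [coeff_iterate_derivative]; norm_num [Nat.descFactorial]
  have hndg5 : (derivative^[5] f).natDegree = 2 := by
    refine le_antisymm ?_ (le_natDegree_of_ne_zero (n := 2) ?_)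
    · have := natDegree_iterate_derivative f 5
      rwa [hnd] at this
    · rw [hc5_2]; exact mul_ne_zero (by norm_num) ha7
  have hcard5 : Multiset.card (derivative^[5] f).roots = (derivative^[5] f).natDegree :=
    (splits_iff_card_roots).mp (IsAlgClosed.splits _)
  have hcardn5 : Multiset.card (derivative^[5] f).roots = 2 := by rw [hcard5, hndg5]
  have hlc5 : (derivative^[5] f).leadingCoeff = (2520:ℂ) * f.coeff 7 := by
    rw [leadingCoeff, hndg5, hc5_2]
  have hV5_1 : (derivative^[5] f).coeff 1 = (derivative^[5] f).leadingCoeff * (-1) ^ 1 * (derivative^[5] f).roots.esymm 1 := by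
    have h := Polynomial.coeff_eq_esymm_roots_of_card hcard5 (k := 1) (by rw [hndg5]; norm_num)
    rwa [hndg5] at h
  have hV5_2 : (derivative^[5] f).coeff 0 = (derivative^[5] f).leadingCoeff * (-1) ^ 2 * (derivative^[5] f).roots.esymm 2 := by
    have h := Polynomial.coeff_eq_esymm_roots_of_card hcard5 (k := 0) (by rw [hndg5]; norm_num)
    rwa [hndg5] at h
  have hem5_1 : (derivative^[5] f).roots.esymm 1 * ((2520:ℂ) * f.coeff 7) = -((720:ℂ) * f.coeff 6) := by
    linear_combination hV5_1 - hc5_1 - (derivative^[5] f).roots.esymm 1 * hlc5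
  have hem5_2 : (derivative^[5] f).roots.esymm 2 * ((2520:ℂ) * f.coeff 7) = (120:ℂ) * f.coeff 5 := by
    linear_combination - hV5_2 + hc5_0 - (derivative^[5] f).roots.esymm 2 * hlc5
  have hez5_3 : (derivative^[5] f).roots.esymm 3 = 0 := esymm_eq_zero _ (by rw [hcardn5]; norm_num)
  have hez5_4 : (derivative^[5] f).roots.esymm 4 = 0 := esymm_eq_zero _ (by rw [hcardn5]; norm_num)
  have hez5_5 : (derivative^[5] f).roots.esymm 5 = 0 := esymm_eq_zero _ (by rw [hcardn5]; norm_num)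
  have hez5_6 : (derivative^[5] f).roots.esymm 6 = 0 := esymm_eq_zero _ (by rw [hcardn5]; norm_num)
  have hez5_7 : (derivative^[5] f).roots.esymm 7 = 0 := esymm_eq_zero _ (by rw [hcardn5]; norm_num)
  have hpm5_0 : msP (derivative^[5] f).roots 0 = 2 := by
    rw [msP_zero_card, hcardn5]; norm_num
  have hpm5_1 : msP (derivative^[5] f).roots 1 * ((7:ℂ) * f.coeff 7) = -(2:ℂ) * f.coeff 6 := by
    linear_combination ((7:ℂ) * f.coeff 7) * newton1 (derivative^[5] f).roots + (((1:ℂ)/360) * (1:ℂ)) * hem5_1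
  have hpm5_2 : msP (derivative^[5] f).roots 2 * ((147:ℂ) * f.coeff 7 ^ 2) = -(14:ℂ) * f.coeff 5 * f.coeff 7 + (12:ℂ) * f.coeff 6 ^ 2 := by
    linear_combination ((147:ℂ) * f.coeff 7 ^ 2) * newton2 (derivative^[5] f).roots + (((7:ℂ)/120) * f.coeff 7 * msP (derivative^[5] f).roots 1) * hem5_1 + ((-6:ℂ) * f.coeff 6 * (1:ℂ)) * hpm5_1 + (((-7:ℂ)/60) * f.coeff 7) * hem5_2
  have hpm5_3 : msP (derivative^[5] f).roots 3 * ((343:ℂ) * f.coeff 7 ^ 3) = (14:ℂ) * f.coeff 5 * f.coeff 6 * f.coeff 7 - (8:ℂ) * f.coeff 6 ^ 3 := by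
    linear_combination ((343:ℂ) * f.coeff 7 ^ 3) * newton3 (derivative^[5] f).roots + (((49:ℂ)/360) * f.coeff 7 ^ 2 * msP (derivative^[5] f).roots 2) * hem5_1 + (((-2:ℂ)/3) * f.coeff 6 * (1:ℂ)) * hpm5_2 + (((-49:ℂ)/360) * f.coeff 7 ^ 2 * msP (derivative^[5] f).roots 1) * hem5_2 + (((-7:ℂ)/3) * f.coeff 5 * f.coeff 7) * hpm5_1 + ((1029:ℂ) * f.coeff 7 ^ 3) * hez5_3
  have hpm5_4 : msP (derivative^[5] f).roots 4 * ((21609:ℂ) * f.coeff 7 ^ 4) = (98:ℂ) * f.coeff 5 ^ 2 * f.coeff 7 ^ 2 - (336:ℂ) * f.coeff 5 * f.coeff 6 ^ 2 * f.coeff 7 + (144:ℂ) * f.coeff 6 ^ 4 := by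
    linear_combination ((21609:ℂ) * f.coeff 7 ^ 4) * newton4 (derivative^[5] f).roots + (((343:ℂ)/40) * f.coeff 7 ^ 3 * msP (derivative^[5] f).roots 3) * hem5_1 + ((-18:ℂ) * f.coeff 6 * (1:ℂ)) * hpm5_3 + (((-343:ℂ)/40) * f.coeff 7 ^ 3 * msP (derivative^[5] f).roots 2) * hem5_2 + ((-7:ℂ) * f.coeff 5 * f.coeff 7) * hpm5_2 + ((21609:ℂ) * f.coeff 7 ^ 4 * msP (derivative^[5] f).roots 1) * hez5_3 + ((-86436:ℂ) * f.coeff 7 ^ 4) * hez5_4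
  have hpm5_5 : msP (derivative^[5] f).roots 5 * ((151263:ℂ) * f.coeff 7 ^ 5) = -(490:ℂ) * f.coeff 5 ^ 2 * f.coeff 6 * f.coeff 7 ^ 2 + (840:ℂ) * f.coeff 5 * f.coeff 6 ^ 3 * f.coeff 7 - (288:ℂ) * f.coeff 6 ^ 5 := by
    linear_combination ((151263:ℂ) * f.coeff 7 ^ 5) * newton5 (derivative^[5] f).roots + (((2401:ℂ)/40) * f.coeff 7 ^ 4 * msP (derivative^[5] f).roots 4) * hem5_1 + ((-2:ℂ) * f.coeff 6 * (1:ℂ)) * hpm5_4 + (((-2401:ℂ)/40) * f.coeff 7 ^ 4 * msP (derivative^[5] f).roots 3) * hem5_2 + ((-21:ℂ) * f.coeff 5 * f.coeff 7) * hpm5_3 + ((151263:ℂ) * f.coeff 7 ^ 5 * msP (derivative^[5] f).roots 2) * hez5_3 + ((-151263:ℂ) * f.coeff 7 ^ 5 * msP (derivative^[5] f).roots 1) * hez5_4 + ((756315:ℂ) * f.coeff 7 ^ 5) * hez5_5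
  have hpm5_6 : msP (derivative^[5] f).roots 6 * ((3176523:ℂ) * f.coeff 7 ^ 6) = -(686:ℂ) * f.coeff 5 ^ 3 * f.coeff 7 ^ 3 + (5292:ℂ) * f.coeff 5 ^ 2 * f.coeff 6 ^ 2 * f.coeff 7 ^ 2 - (6048:ℂ) * f.coeff 5 * f.coeff 6 ^ 4 * f.coeff 7 + (1728:ℂ) * f.coeff 6 ^ 6 := by
    linear_combination ((3176523:ℂ) * f.coeff 7 ^ 6) * newton6 (derivative^[5] f).roots + (((50421:ℂ)/40) * f.coeff 7 ^ 5 * msP (derivative^[5] f).roots 5) * hem5_1 + ((-6:ℂ) * f.coeff 6 * (1:ℂ)) * hpm5_5 + (((-50421:ℂ)/40) * f.coeff 7 ^ 5 * msP (derivative^[5] f).roots 4) * hem5_2 + ((-7:ℂ) * f.coeff 5 * f.coeff 7) * hpm5_4 + ((3176523:ℂ) * f.coeff 7 ^ 6 * msP (derivative^[5] f).roots 3) * hez5_3 + ((-3176523:ℂ) * f.coeff 7 ^ 6 * msP (derivative^[5] f).roots 2) * hez5_4 + ((3176523:ℂ) * f.coeff 7 ^ 6 * msP (derivative^[5] f).roots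 1) * hez5_5 + ((-19059138:ℂ) * f.coeff 7 ^ 6) * hez5_6
  have hpm5_7 : msP (derivative^[5] f).roots 7 * ((22235661:ℂ) * f.coeff 7 ^ 7) = (4802:ℂ) * f.coeff 5 ^ 3 * f.coeff 6 * f.coeff 7 ^ 3 - (16464:ℂ) * f.coeff 5 ^ 2 * f.coeff 6 ^ 3 * f.coeff 7 ^ 2 + (14112:ℂ) * f.coeff 5 * f.coeff 6 ^ 5 * f.coeff 7 - (3456:ℂ) * f.coeff 6 ^ 7 := by
    linear_combination ((22235661:ℂ) * f.coeff 7 ^ 7) * newton7 (derivative^[5] f).roots + (((352947:ℂ)/40) * f.coeff 7 ^ 6 * msP (derivative^[5] f).roots 6) * hem5_1 + ((-2:ℂ) * f.coeff 6 * (1:ℂ)) * hpm5_6 + (((-352947:ℂ)/40) * f.coeff 7 ^ 6 * msP (derivative^[5] f).roots 5) * hem5_2 + ((-7:ℂ) * f.coeff 5 * f.coeff 7) * hpm5_5 + ((22235661:ℂ) * f.coeff 7 ^ 7 * msP (derivative^[5] f).roots 4) * hez5_3 + ((-22235661:ℂ) * f.coeff 7 ^ 7 * msP (derivative^[5] f).roots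 3) * hez5_4 + ((22235661:ℂ) * f.coeff 7 ^ 7 * msP (derivative^[5] f).roots 2) * hez5_5 + ((-22235661:ℂ) * f.coeff 7 ^ 7 * msP (derivative^[5] f).roots 1) * hez5_6 + ((155649627:ℂ) * f.coeff 7 ^ 7) * hez5_7
  have hS5 : ((derivative^[5] f).roots.map (fun x => f.eval x)).sum * ((7411887:ℂ) * f.coeff 7 ^ 7) = (14823774:ℂ) * f.coeff 0 * f.coeff 7 ^ 7 - (2117682:ℂ) * f.coeff 1 * f.coeff 6 * f.coeff 7 ^ 6 - (705894:ℂ) * f.coeff 2 * f.coeff 5 * f.coeff 7 ^ 6 + (605052:ℂ) * f.coeff 2 * f.coeff 6 ^ 2 * f.coeff 7 ^ 5 + (302526:ℂ) * f.coeff 3 * f.coeff 5 * f.coeff 6 * f.coeff 7 ^ 5 - (172872:ℂ) * f.coeff 3 * f.coeff 6 ^ 3 * f.coeff 7 ^ 4 + (33614:ℂ) * f.coeff 4 * f.coeff 5 ^ 2 * f.coeff 7 ^ 5 - (115248:ℂ) * f.coeff 4 * f.coeff 5 * f.coeff 6 ^ 2 * f.coeff 7 ^ 4 + (49392:ℂ)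 * f.coeff 4 * f.coeff 6 ^ 4 * f.coeff 7 ^ 3 - (24010:ℂ) * f.coeff 5 ^ 3 * f.coeff 6 * f.coeff 7 ^ 4 + (48020:ℂ) * f.coeff 5 ^ 2 * f.coeff 6 ^ 3 * f.coeff 7 ^ 3 - (23520:ℂ) * f.coeff 5 * f.coeff 6 ^ 5 * f.coeff 7 ^ 2 + (2880:ℂ) * f.coeff 6 ^ 7 * f.coeff 7 := by
    rw [sum_map_eval f hnd]
    linear_combination ((7411887:ℂ) * f.coeff 7 ^ 7 * f.coeff 0) * hpm5_0 + ((1058841:ℂ) * f.coeff 1 * f.coeff 7 ^ 6) * hpm5_1 + ((50421:ℂ) * f.coeff 2 * f.coeff 7 ^ 5) * hpm5_2 + ((21609:ℂ) * f.coeff 3 * f.coeff 7 ^ 4) * hpm5_3 + ((343:ℂ) * f.coeff 4 * f.coeff 7 ^ 3) * hpm5_4 + ((49:ℂ) * f.coeff 5 * f.coeff 7 ^ 2) * hpm5_5 + (((7:ℂ)/3) * f.coeff 6 * f.coeff 7) * hpm5_6 + (((1:ℂ)/3) * f.coeff 7 * (1:ℂ)) * hpm5_7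
  have hc6_0 : (derivative^[6] f).coeff 0 = (720:ℂ) * f.coeff 6 := by
    rw [coeff_iterate_derivative]; norm_num [Nat.descFactorial]
  have hc6_1 : (derivative^[6] f).coeff 1 = (5040:ℂ) * f.coeff 7 := by
    rw [coeff_iterate_derivative]; norm_num [Nat.descFactorial]
  have hndg6 : (derivative^[6] f).natDegree = 1 := by
    refine le_antisymm ?_ (le_natDegree_of_ne_zero (n := 1) ?_)
    · have := natDegree_iterate_derivative f 6
      rwa [hnd] at this
    · rw [hc6_1]; exact mul_ne_zero (by norm_num) ha7
  have hcard6 : Multiset.card (derivative^[6] f).roots = (derivative^[6] f).natDegree :=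
    (splits_iff_card_roots).mp (IsAlgClosed.splits _)
  have hcardn6 : Multiset.card (derivative^[6] f).roots = 1 := by rw [hcard6, hndg6]
  have hlc6 : (derivative^[6] f).leadingCoeff = (5040:ℂ) * f.coeff 7 := by
    rw [leadingCoeff, hndg6, hc6_1]
  have hV6_1 : (derivative^[6] f).coeff 0 = (derivative^[6] f).leadingCoeff * (-1) ^ 1 * (derivative^[6] f).roots.esymm 1 := by
    have h := Polynomial.coeff_eq_esymm_roots_of_card hcard6 (k := 0) (by rw [hndg6]; norm_num)
    rwa [hndg6] at h
  have hem6_1 : (derivative^[6] f).roots.esymm 1 * ((5040:ℂ) * f.coeff 7) = -((720:ℂ) * f.coeff 6) := by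
    linear_combination hV6_1 - hc6_0 - (derivative^[6] f).roots.esymm 1 * hlc6
  have hez6_2 : (derivative^[6] f).roots.esymm 2 = 0 := esymm_eq_zero _ (by rw [hcardn6]; norm_num)
  have hez6_3 : (derivative^[6] f).roots.esymm 3 = 0 := esymm_eq_zero _ (by rw [hcardn6]; norm_num)
  have hez6_4 : (derivative^[6] f).roots.esymm 4 = 0 := esymm_eq_zero _ (by rw [hcardn6]; norm_num)
  have hez6_5 : (derivative^[6] f).roots.esymm 5 = 0 := esymm_eq_zero _ (by rw [hcardn6]; norm_num)
  have hez6_6 : (derivative^[6] f).roots.esymm 6 = 0 := esymm_eq_zero _ (by rw [hcardn6]; norm_num)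
  have hez6_7 : (derivative^[6] f).roots.esymm 7 = 0 := esymm_eq_zero _ (by rw [hcardn6]; norm_num)
  have hpm6_0 : msP (derivative^[6] f).roots 0 = 1 := by
    rw [msP_zero_card, hcardn6]; norm_num
  have hpm6_1 : msP (derivative^[6] f).roots 1 * ((7:ℂ) * f.coeff 7) = -(1:ℂ) * f.coeff 6 := by
    linear_combination ((7:ℂ) * f.coeff 7) * newton1 (derivative^[6] f).roots + (((1:ℂ)/720) * (1:ℂ)) * hem6_1
  have hpm6_2 : msP (derivative^[6] f).roots 2 * ((49:ℂ) * f.coeff 7 ^ 2) = (1:ℂ) * f.coeff 6 ^ 2 := by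
    linear_combination ((49:ℂ) * f.coeff 7 ^ 2) * newton2 (derivative^[6] f).roots + (((7:ℂ)/720) * f.coeff 7 * msP (derivative^[6] f).roots 1) * hem6_1 + ((-1:ℂ) * f.coeff 6 * (1:ℂ)) * hpm6_1 + ((-98:ℂ) * f.coeff 7 ^ 2) * hez6_2
  have hpm6_3 : msP (derivative^[6] f).roots 3 * ((343:ℂ) * f.coeff 7 ^ 3) = -(1:ℂ) * f.coeff 6 ^ 3 := by
    linear_combination ((343:ℂ) * f.coeff 7 ^ 3) * newton3 (derivative^[6] f).roots + (((49:ℂ)/720) * f.coeff 7 ^ 2 * msP (derivative^[6] f).roots 2) * hem6_1 + ((-1:ℂ) * f.coeff 6 * (1:ℂ)) * hpm6_2 + ((-343:ℂ) * f.coeff 7 ^ 3 * msP (derivative^[6] f).roots 1) * hez6_2 + ((1029:ℂ) * f.coeff 7 ^ 3) * hez6_3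
  have hpm6_4 : msP (derivative^[6] f).roots 4 * ((2401:ℂ) * f.coeff 7 ^ 4) = (1:ℂ) * f.coeff 6 ^ 4 := by
    linear_combination ((2401:ℂ) * f.coeff 7 ^ 4) * newton4 (derivative^[6] f).roots + (((343:ℂ)/720) * f.coeff 7 ^ 3 * msP (derivative^[6] f).roots 3) * hem6_1 + ((-1:ℂ) * f.coeff 6 * (1:ℂ)) * hpm6_3 + ((-2401:ℂ) * f.coeff 7 ^ 4 * msP (derivative^[6] f).roots 2) * hez6_2 + ((2401:ℂ) * f.coeff 7 ^ 4 * msP (derivative^[6] f).roots 1) * hez6_3 + ((-9604:ℂ) * f.coeff 7 ^ 4) * hez6_4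
  have hpm6_5 : msP (derivative^[6] f).roots 5 * ((16807:ℂ) * f.coeff 7 ^ 5) = -(1:ℂ) * f.coeff 6 ^ 5 := by
    linear_combination ((16807:ℂ) * f.coeff 7 ^ 5) * newton5 (derivative^[6] f).roots + (((2401:ℂ)/720) * f.coeff 7 ^ 4 * msP (derivative^[6] f).roots 4) * hem6_1 + ((-1:ℂ) * f.coeff 6 * (1:ℂ)) * hpm6_4 + ((-16807:ℂ) * f.coeff 7 ^ 5 * msP (derivative^[6] f).roots 3) * hez6_2 + ((16807:ℂ) * f.coeff 7 ^ 5 * msP (derivative^[6] f).roots 2) * hez6_3 + ((-16807:ℂ) * f.coeff 7 ^ 5 * msP (derivative^[6] f).roots 1) * hez6_4 + ((84035:ℂ) * f.coeff 7 ^ 5) * hez6_5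
  have hpm6_6 : msP (derivative^[6] f).roots 6 * ((117649:ℂ) * f.coeff 7 ^ 6) = (1:ℂ) * f.coeff 6 ^ 6 := by
    linear_combination ((117649:ℂ) * f.coeff 7 ^ 6) * newton6 (derivative^[6] f).roots + (((16807:ℂ)/720) * f.coeff 7 ^ 5 * msP (derivative^[6] f).roots 5) * hem6_1 + ((-1:ℂ) * f.coeff 6 * (1:ℂ)) * hpm6_5 + ((-117649:ℂ) * f.coeff 7 ^ 6 * msP (derivative^[6] f).roots 4) * hez6_2 + ((117649:ℂ) * f.coeff 7 ^ 6 * msP (derivative^[6] f).roots 3) * hez6_3 + ((-117649:ℂ) * f.coeff 7 ^ 6 * msP (derivative^[6] f).roots 2) * hez6_4 + ((117649:ℂ) * f.coeff 7 ^ 6 * msP (derivative^[6] f).roots 1) * hez6_5 + ((-705894:ℂ) * f.coeff 7 ^ 6) * hez6_6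
  have hpm6_7 : msP (derivative^[6] f).roots 7 * ((823543:ℂ) * f.coeff 7 ^ 7) = -(1:ℂ) * f.coeff 6 ^ 7 := by
    linear_combination ((823543:ℂ) * f.coeff 7 ^ 7) * newton7 (derivative^[6] f).roots + (((117649:ℂ)/720) * f.coeff 7 ^ 6 * msP (derivative^[6] f).roots 6) * hem6_1 + ((-1:ℂ) * f.coeff 6 * (1:ℂ)) * hpm6_6 + ((-823543:ℂ) * f.coeff 7 ^ 7 * msP (derivative^[6] f).roots 5) * hez6_2 + ((823543:ℂ) * f.coeff 7 ^ 7 * msP (derivative^[6] f).roots 4) * hez6_3 + ((-823543:ℂ) * f.coeff 7 ^ 7 * msP (derivative^[6] f).roots 3) * hez6_4 + ((823543:ℂ) * f.coeff 7 ^ 7 * msP (derivative^[6] f).roots 2) * hez6_5 + ((-823543:ℂ) * f.coeff 7 ^ 7 * msP (derivative^[6] f).roots 1) * hez6_6 + ((5764801:ℂ) * f.coeff 7 ^ 7) * hez6_7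
  have hS6 : ((derivative^[6] f).roots.map (fun x => f.eval x)).sum * ((823543:ℂ) * f.coeff 7 ^ 7) = (823543:ℂ) * f.coeff 0 * f.coeff 7 ^ 7 - (117649:ℂ) * f.coeff 1 * f.coeff 6 * f.coeff 7 ^ 6 + (16807:ℂ) * f.coeff 2 * f.coeff 6 ^ 2 * f.coeff 7 ^ 5 - (2401:ℂ) * f.coeff 3 * f.coeff 6 ^ 3 * f.coeff 7 ^ 4 + (343:ℂ) * f.coeff 4 * f.coeff 6 ^ 4 * f.coeff 7 ^ 3 - (49:ℂ) * f.coeff 5 * f.coeff 6 ^ 5 * f.coeff 7 ^ 2 + (6:ℂ) * f.coeff 6 ^ 7 * f.coeff 7 := by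
    rw [sum_map_eval f hnd]
    linear_combination ((823543:ℂ) * f.coeff 7 ^ 7 * f.coeff 0) * hpm6_0 + ((117649:ℂ) * f.coeff 1 * f.coeff 7 ^ 6) * hpm6_1 + ((16807:ℂ) * f.coeff 2 * f.coeff 7 ^ 5) * hpm6_2 + ((2401:ℂ) * f.coeff 3 * f.coeff 7 ^ 4) * hpm6_3 + ((343:ℂ) * f.coeff 4 * f.coeff 7 ^ 3) * hpm6_4 + ((49:ℂ) * f.coeff 5 * f.coeff 7 ^ 2) * hpm6_5 + ((7:ℂ) * f.coeff 6 * f.coeff 7) * hpm6_6 + ((1:ℂ) * f.coeff 7 * (1:ℂ)) * hpm6_7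
  have key : (1 * phi f 1 - 3 * phi f 2 + 5 * phi f 3 - 5 * phi f 4 + 3 * phi f 5 - 1 * phi f 6) * (f.coeff 7 ^ 7) = 0 := by
    simp only [phi, hnd]
    rw [show ((7 - 1 : ℕ) : ℂ) = 6 by norm_num]
    rw [show ((7 - 2 : ℕ) : ℂ) = 5 by norm_num]
    rw [show ((7 - 3 : ℕ) : ℂ) = 4 by norm_num]
    rw [show ((7 - 4 : ℕ) : ℂ) = 3 by norm_num]
    rw [show ((7 - 5 : ℕ) : ℂ) = 2 by norm_num]
    rw [show ((7 - 6 : ℕ) : ℂ) = 1 by norm_num]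
    linear_combination ((1:ℂ)/4941258) * hS1 + ((-1:ℂ)/12353145) * hS2 + ((1:ℂ)/16470860) * hS3 + ((-1:ℂ)/2470629) * hS4 + ((1:ℂ)/4941258) * hS5 + ((-1:ℂ)/823543) * hS6
  rcases mul_eq_zero.mp key with h | h
  · exact h
  · exact absurd h (pow_ne_zero 7 ha7)
end

section
/- Let f be a polynomial over ℂ of degree 4. Then the average of f' over the multiset of the 4 roots of f (counted with multiplicity) equals −2 times the value of f' at the unique root of f'''; equivalently, (1/4)·∑_{r ∈ roots(f)} f'(r) + 2·f'(z) = 0 where z is the root of f'''. Moreover, the average of f' over the 2 roots of f'' also equals f'(z). -/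
open Polynomial

private lemma multiset_cons_of_card {s : Multiset ℂ} {n : ℕ} (h : s.card = n + 1) :
    ∃ a t, s = a ::ₘ t ∧ Multiset.card t = n := by
  obtain ⟨a, ha⟩ := Multiset.card_pos_iff_exists_mem.mp (by rw [h]; exact Nat.succ_pos n)
  obtain ⟨t, rfl⟩ := Multiset.exists_cons_of_mem ha
  exact ⟨a, t, rfl, by simpa using h⟩

set_option maxHeartbeats 1000000 in
/-- For any quartic `f` over `ℂ`, with `z` the root of `f'''`: the average of `f'`
over the 4 roots of `f` equals `−2·f'(z)`, and the average of `f'` over the 2 roots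
of `f''` equals `f'(z)`. -/
theorem quartic_mean_slope_relations (f : Polynomial ℂ) (hf : f.degree = 4)
    (z : ℂ) (hz : (derivative (derivative (derivative f))).eval z = 0) :
    (f.roots.map (fun r => (derivative f).eval r)).sum / 4
        + 2 * (derivative f).eval z = 0 ∧
      ((derivative (derivative f)).roots.map (fun s => (derivative f).eval s)).sum / 2
        = (derivative f).eval z := by
  have hsplit : f.Splits := IsAlgClosed.splits f
  have hnd : f.natDegree = 4 := natDegree_eq_of_degree_eq_some hf
  have ha : f.leadingCoeff ≠ 0 := by
    intro h
    rw [leadingCoeff_eq_zero] at h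
    simp [h] at hf
  set a := f.leadingCoeff with ha'
  have hcard : f.roots.card = 4 := by
    rw [splits_iff_card_roots] at hsplit
    rw [hsplit, hnd]
  obtain ⟨r1, t1, h1, hc1⟩ := multiset_cons_of_card (n := 3) hcard
  obtain ⟨r2, t2, h2, hc2⟩ := multiset_cons_of_card (n := 2) hc1
  obtain ⟨r3, t3, h3, hc3⟩ := multiset_cons_of_card (n := 1) hc2
  obtain ⟨r4, t4, h4, hc4⟩ := multiset_cons_of_card (n := 0) hc3
  rw [Multiset.card_eq_zero] at hc4
  subst hc4 h4 h3 h2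
  have hroots : f.roots = r1 ::ₘ r2 ::ₘ r3 ::ₘ r4 ::ₘ 0 := h1
  have hfe : f = C a * ((X - C r1) * ((X - C r2) * ((X - C r3) * ((X - C r4) * 1)))) := by
    have := Splits.eq_prod_roots (IsAlgClosed.splits f)
    rw [hroots] at this
    simpa using this
  have hDe : ∀ x : ℂ, (derivative f).eval x =
      a * (4 * x ^ 3 - 3 * (r1 + r2 + r3 + r4) * x ^ 2
        + 2 * (r1 * r2 + r1 * r3 + r1 * r4 + r2 * r3 + r2 * r4 + r3 * r4) * x
        - (r1 * r2 * r3 + r1 * r2 * r4 + r1 * r3 * r4 + r2 * r3 * r4)) := by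
    intro x
    rw [hfe]
    simp only [derivative_mul, derivative_C, derivative_zero, derivative_sub, derivative_add, derivative_neg,
      derivative_X, derivative_one, derivative_ofNat, derivative_X_pow,
      eval_mul, eval_add, eval_sub, eval_neg, eval_pow, eval_ofNat, eval_X, eval_C, eval_one,
      eval_zero]
    ring
  have hD2e : ∀ x : ℂ, (derivative (derivative f)).eval x =
      a * (12 * x ^ 2 - 6 * (r1 + r2 + r3 + r4) * x
        + 2 * (r1 * r2 + r1 * r3 + r1 * r4 + r2 * r3 + r2 * r4 + r3 * r4)) := by
    intro x
    rw [hfe]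
    simp only [derivative_mul, derivative_C, derivative_zero, derivative_sub, derivative_add, derivative_neg,
      derivative_X, derivative_one, derivative_ofNat, derivative_X_pow,
      eval_mul, eval_add, eval_sub, eval_neg, eval_pow, eval_ofNat, eval_X, eval_C, eval_one,
      eval_zero]
    ring
  have hD3e : (derivative (derivative (derivative f))).eval z =
      a * (24 * z - 6 * (r1 + r2 + r3 + r4)) := by
    rw [hfe]
    simp only [derivative_mul, derivative_C, derivative_zero, derivative_sub, derivative_add, derivative_neg,
      derivative_X, derivative_one, derivative_ofNat, derivative_X_pow,
      eval_mul, eval_add, eval_sub, eval_neg, eval_pow, eval_ofNat, eval_X, eval_C, eval_one,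
      eval_zero]
    ring
  have hz4 : z = (r1 + r2 + r3 + r4) / 4 := by
    rw [hD3e] at hz
    rcases mul_eq_zero.mp hz with h | h
    · exact absurd h ha
    · linear_combination h / 24
  subst hz4
  constructor
  · rw [hroots]
    simp only [Multiset.map_cons, Multiset.sum_cons, Multiset.map_zero, Multiset.sum_zero,
      hDe]
    ring
  · obtain ⟨w, hw⟩ := IsAlgClosed.exists_pow_nat_eq
      (((r1 + r2 + r3 + r4) / 4) ^ 2
        - (r1 * r2 + r1 * r3 + r1 * r4 + r2 * r3 + r2 * r4 + r3 * r4) / 6) (n := 2)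
      (by norm_num)
    have hf2 : derivative (derivative f) =
        C (12 * a) * ((X - C ((r1 + r2 + r3 + r4) / 4 + w))
          * (X - C ((r1 + r2 + r3 + r4) / 4 - w))) := by
      apply Polynomial.funext
      intro x
      rw [hD2e]
      simp only [eval_mul, eval_sub, eval_add, eval_X, eval_C]
      linear_combination (12 * a) * hw
    rw [hf2, roots_C_mul _ (by simpa using ha),
      roots_mul (mul_ne_zero (X_sub_C_ne_zero _) (X_sub_C_ne_zero _)),
      roots_X_sub_C, roots_X_sub_C]
    simp only [Multiset.map_add, Multiset.map_singleton, Multiset.sum_add,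
      Multiset.sum_singleton, hDe]
    ring
end

section
/- Let f be a polynomial over ℂ of degree 3 and let F be any polynomial over ℂ with F' = f (an antiderivative of f, of degree 4). Then 5·(the average of F over the 3 roots of f) − 6·(the average of F over the 2 roots of f') + 1·(the value of F at the unique root of f'') = 0, where all roots are counted with multiplicity; in particular this relation holds for every choice of the constant of integration. -/
open Polynomial

/-- For any cubic `f` over `ℂ` and any antiderivative `F` of `f` (any constant of
integration), `5·(average of F over roots of f) − 6·(average of F over roots of f')
+ 1·F(z) = 0`, where `z` is the root of `f''`. -/
theorem cubic_antiderivative_relation (f : Polynomial ℂ) (hf : f.degree = 3)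
    (F : Polynomial ℂ) (hF : derivative F = f)
    (z : ℂ) (hz : (derivative (derivative f)).eval z = 0) :
    5 * ((f.roots.map (fun r => F.eval r)).sum / 3)
      - 6 * (((derivative f).roots.map (fun t => F.eval t)).sum / 2)
      + 1 * F.eval z = 0 := by
  have hf0 : f ≠ 0 := fun h => by simp [h] at hf
  have hnd : f.natDegree = 3 := natDegree_eq_of_degree_eq_some hf
  have ha : f.coeff 3 ≠ 0 := by
    have h := leadingCoeff_ne_zero.mpr hf0
    rwa [leadingCoeff, hnd] at h
  set a := f.coeff 3 with ha_def
  have hsplit : Splits f := IsAlgClosed.splits f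
  have hcard : f.roots.card = 3 := (splits_iff_card_roots.mp hsplit).trans hnd
  obtain ⟨r1, r2, r3, hr⟩ := Multiset.card_eq_three.mp hcard
  have hfac := hsplit.eq_prod_roots
  rw [hr, leadingCoeff, hnd] at hfac
  have hexp : f = C a * X^3 + C (-(a*(r1+r2+r3))) * X^2
      + C (a*(r1*r2+r1*r3+r2*r3)) * X + C (-(a*(r1*r2*r3))) := by
    rw [hfac]
    simp only [Multiset.insert_eq_cons, Multiset.map_cons, Multiset.map_singleton,
      Multiset.prod_cons, Multiset.prod_singleton, map_neg, map_mul, map_add]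
    ring
  have hb : f.coeff 2 = -(a*(r1+r2+r3)) := by
    rw [hexp]
    simp only [coeff_add, coeff_C_mul, coeff_X_pow, coeff_C, coeff_X]
    norm_num
  have hc : f.coeff 1 = a*(r1*r2+r1*r3+r2*r3) := by
    rw [hexp]
    simp only [coeff_add, coeff_C_mul, coeff_X_pow, coeff_C, coeff_X]
    norm_num
  have hd : f.coeff 0 = -(a*(r1*r2*r3)) := by
    rw [hexp]
    simp only [coeff_add, coeff_C_mul, coeff_X_pow, coeff_C, coeff_X]
    norm_num
  -- the derivative of f
  have hd1 : derivative f = C (3*a) * X^2 + C (-(2*a*(r1+r2+r3))) * X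
      + C (a*(r1*r2+r1*r3+r2*r3)) := by
    rw [hexp]
    simp only [derivative_add, derivative_C_mul, derivative_X_pow, derivative_X, derivative_C]
    push_cast
    simp only [map_neg, map_mul, map_add, map_ofNat]
    ring
  have h3a : (3:ℂ)*a ≠ 0 := by simp [ha]
  have hnd1 : (derivative f).natDegree = 2 := by rw [hd1]; exact natDegree_quadratic h3a
  have hlc1 : (derivative f).leadingCoeff = 3*a := by rw [hd1]; exact leadingCoeff_quadratic h3a
  have hsplit1 : Splits (derivative f) := IsAlgClosed.splits _
  have hcard1 : (derivative f).roots.card = 2 := (splits_iff_card_roots.mp hsplit1).trans hnd1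
  obtain ⟨t1, t2, ht⟩ := Multiset.card_eq_two.mp hcard1
  have hfac1 := hsplit1.eq_prod_roots
  rw [ht, hlc1] at hfac1
  have hexp1 : derivative f = C (3*a) * X^2 + C (-(3*a*(t1+t2))) * X + C (3*a*(t1*t2)) := by
    rw [hfac1]
    simp only [Multiset.insert_eq_cons, Multiset.map_cons, Multiset.map_singleton,
      Multiset.prod_cons, Multiset.prod_singleton, map_neg, map_mul, map_add, map_ofNat]
    ring
  -- Vieta for the roots of f'
  have h := hd1.symm.trans hexp1
  have h1 := congrArg (fun p => coeff p 1) h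
  have h0 := congrArg (fun p => coeff p 0) h
  simp only [coeff_add, coeff_C_mul, coeff_X_pow, coeff_C, coeff_X] at h1 h0
  norm_num at h1 h0
  have k1 : a * (3*(t1+t2) - 2*(r1+r2+r3)) = 0 := by linear_combination -h1
  have k0 : a * (3*(t1*t2) - (r1*r2+r1*r3+r2*r3)) = 0 := by linear_combination -h0
  have ht1 : t1 + t2 = 2*(r1+r2+r3)/3 := by
    have := (mul_eq_zero.mp k1).resolve_left ha
    field_simp
    linear_combination this
  have ht2 : t1 * t2 = (r1*r2+r1*r3+r2*r3)/3 := by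
    have := (mul_eq_zero.mp k0).resolve_left ha
    field_simp
    linear_combination this
  -- the root of f''
  have hd2 : derivative (derivative f) = C (6*a) * X + C (-(2*a*(r1+r2+r3))) := by
    rw [hd1]
    simp only [derivative_add, derivative_C_mul, derivative_X_pow, derivative_X, derivative_C]
    push_cast
    simp only [map_neg, map_mul, map_add, map_ofNat]
    ring
  rw [hd2] at hz
  simp only [eval_add, eval_mul, eval_C, eval_X] at hz
  have kz : a * (3*z - (r1+r2+r3)) = 0 := by linear_combination hz/2
  have hz' : z = (r1+r2+r3)/3 := by
    have := (mul_eq_zero.mp kz).resolve_left ha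
    field_simp
    linear_combination this
  -- coefficients of F
  have hco : ∀ n : ℕ, f.coeff n = F.coeff (n+1) * ((n : ℂ)+1) := by
    intro n; rw [← hF, coeff_derivative]
  have hF4 : F.coeff 4 = a/4 := by
    have h := hco 3; push_cast at h
    field_simp
    linear_combination -h
  have hF3 : F.coeff 3 = -(a*(r1+r2+r3))/3 := by
    have h := hco 2; push_cast at h; rw [hb] at h
    field_simp
    linear_combination -h
  have hF2 : F.coeff 2 = a*(r1*r2+r1*r3+r2*r3)/2 := by
    have h := hco 1; push_cast at h; rw [hc] at h
    field_simp
    linear_combination -h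
  have hF1 : F.coeff 1 = -(a*(r1*r2*r3)) := by
    have h := hco 0; push_cast at h; rw [hd] at h
    linear_combination -h
  -- degree of F
  have hFn0 : F.natDegree ≠ 0 := by
    intro h0'
    have := eq_C_of_natDegree_eq_zero h0'
    rw [this] at hF
    simp only [derivative_C] at hF
    exact hf0 hF.symm
  have hdeg := degree_derivative_eq F (Nat.pos_of_ne_zero hFn0)
  rw [hF, hf] at hdeg
  have hFnd : F.natDegree = 4 := by
    have h4 : F.natDegree - 1 = 3 := by exact_mod_cast hdeg.symm
    omega
  have heval : ∀ x : ℂ, F.eval x = F.coeff 0 + F.coeff 1 * x + F.coeff 2 * x^2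
      + F.coeff 3 * x^3 + F.coeff 4 * x^4 := by
    intro x
    rw [eval_eq_sum_range' (show F.natDegree < 5 by omega) x]
    simp [Finset.sum_range_succ]
  -- assemble
  rw [hr, ht]
  simp only [Multiset.insert_eq_cons, Multiset.map_cons, Multiset.map_singleton,
    Multiset.sum_cons, Multiset.sum_singleton]
  rw [hz', heval r1, heval r2, heval r3, heval t1, heval t2,
    heval ((r1+r2+r3)/3), hF4, hF3, hF2, hF1]
  linear_combination
    (-3*((-(a*(r1*r2*r3))) + (a*(r1*r2+r1*r3+r2*r3)/2)*(t1+t2+2*(r1+r2+r3)/3)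
      + (-(a*(r1+r2+r3))/3)*((t1+t2)^2+(t1+t2)*(2*(r1+r2+r3)/3)+(2*(r1+r2+r3)/3)^2-3*(t1*t2))
      + (a/4)*((t1+t2)^3+(t1+t2)^2*(2*(r1+r2+r3)/3)+(t1+t2)*(2*(r1+r2+r3)/3)^2
        +(2*(r1+r2+r3)/3)^3-4*(t1*t2)*(t1+t2)-4*(t1*t2)*(2*(r1+r2+r3)/3)))) * ht1
    + (-3*((a*(r1*r2+r1*r3+r2*r3)/2)*(-2) + (-(a*(r1+r2+r3))/3)*(-3*(2*(r1+r2+r3)/3))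
      + (a/4)*(-4*(2*(r1+r2+r3)/3)^2+2*(t1*t2)+2*((r1*r2+r1*r3+r2*r3)/3)))) * ht2
end
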